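/- arXiv:2509.24277 — 7 statements merged into one kernel-verified Lean document; each statement's English description precedes it below -/
import Mathlib

section
/- Let J : ℝ^n → ℝ be twice continuously differentiable and coercive with infimum J* (attained), and for h ≥ 0 let L̄(h) = sup{ ‖∇²J(z)‖ : J(z) ≤ J* + h }. Fix h ≥ 0 with L̄(h) > 0 and let z ∈ ℝ^n satisfy J(z) ≤ J* + h. Then for every s ∈ [0, 2/L̄(h)], the point z − s∇J(z) remains in the sublevel set, i.e., J(z − s∇J(z)) ≤ J* + h. -/
open scoped RealInnerProductSpace

lemma aux_hess_norm_le {E : Type*} [NormedAddCommGroup E] [NormedSpace ℝ E]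
    (J : E → ℝ) (x : E) :
    ‖fderiv ℝ (fderiv ℝ J) x‖ ≤ ‖iteratedFDeriv ℝ 2 J x‖ := by
  refine ContinuousLinearMap.opNorm_le_bound _ (norm_nonneg _) fun v => ?_
  refine ContinuousLinearMap.opNorm_le_bound _
    (mul_nonneg (norm_nonneg _) (norm_nonneg _)) fun w => ?_
  have h1 : fderiv ℝ (fderiv ℝ J) x v w = iteratedFDeriv ℝ 2 J x ![v, w] := by
    rw [iteratedFDeriv_two_apply]
    simp
  have h2 := (iteratedFDeriv ℝ 2 J x).le_opNorm ![v, w]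
  rw [h1]
  calc ‖iteratedFDeriv ℝ 2 J x ![v, w]‖ ≤ ‖iteratedFDeriv ℝ 2 J x‖ * ∏ i, ‖(![v, w]) i‖ := h2
    _ = ‖iteratedFDeriv ℝ 2 J x‖ * ‖v‖ * ‖w‖ := by
        simp [Fin.prod_univ_two, mul_assoc]

set_option maxHeartbeats 1000000 in
/-- with `J` twice continuously differentiable and coercive with attained
infimum `Jstar`, and `Lbar h` the sup of the Hessian operator norm over the sublevel set
`{z | J z ≤ Jstar + h}`, if `J z ≤ Jstar + h` and `Lbar h > 0`, then for all
`s ∈ [0, 2 / Lbar h]` the point `z − s ∇J(z)` stays in the sublevel set. -/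
theorem stmt_1 (n : ℕ) (J : EuclideanSpace ℝ (Fin n) → ℝ)
    (hJ : ContDiff ℝ 2 J)
    (hcoer : Filter.Tendsto J (Filter.cocompact (EuclideanSpace ℝ (Fin n))) Filter.atTop)
    (Jstar : ℝ) (hlb : ∀ z, Jstar ≤ J z) (hatt : ∃ z, J z = Jstar)
    (Lbar : ℝ → ℝ)
    (hLbar : ∀ h : ℝ, 0 ≤ h →
      Lbar h = sSup ((fun z => ‖iteratedFDeriv ℝ 2 J z‖) '' {z | J z ≤ Jstar + h}))
    (h : ℝ) (hh : 0 ≤ h) (hLpos : 0 < Lbar h)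
    (z : EuclideanSpace ℝ (Fin n)) (hz : J z ≤ Jstar + h) :
    ∀ s ∈ Set.Icc (0 : ℝ) (2 / Lbar h), J (z - s • gradient J z) ≤ Jstar + h := by
  set L := Lbar h with hLdef
  set c := Jstar + h with hcdef
  set C := {x : EuclideanSpace ℝ (Fin n) | J x ≤ c} with hCdef
  have hJc : Continuous J := hJ.continuous
  have hdiff : Differentiable ℝ J := hJ.differentiable (by norm_num)
  have hdiff2 : Differentiable ℝ (fderiv ℝ J) :=
    (hJ.fderiv_right (m := 1) (by norm_num)).differentiable (by norm_num)
  -- the sublevel set is compact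
  have hclosed : IsClosed C := isClosed_le hJc continuous_const
  have hev : ∀ᶠ x in Filter.cocompact (EuclideanSpace ℝ (Fin n)), c + 1 ≤ J x :=
    hcoer.eventually (Filter.eventually_ge_atTop (c + 1))
  rw [Filter.eventually_iff, Filter.mem_cocompact] at hev
  obtain ⟨K, hK, hKsub⟩ := hev
  have hCK : C ⊆ K := by
    intro x hx
    by_contra hxK
    have h1 : c + 1 ≤ J x := hKsub hxK
    have h2 : J x ≤ c := hx
    linarith
  have hCcpt : IsCompact C := hK.of_isClosed_subset hclosed hCK
  -- the Hessian norm is bounded by L on C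
  have hLub : ∀ x ∈ C, ‖fderiv ℝ (fderiv ℝ J) x‖ ≤ L := by
    intro x hx
    have h1 := aux_hess_norm_le J x
    have h2 : ‖iteratedFDeriv ℝ 2 J x‖ ≤ L := by
      rw [hLdef, hLbar h hh]
      apply le_csSup
      · exact (hCcpt.image ((hJ.continuous_iteratedFDeriv
          (by exact_mod_cast le_rfl)).norm)).bddAbove
      · exact ⟨x, hx, rfl⟩
    linarith
  -- relation between fderiv and gradient
  have hgrad : ∀ x v, fderiv ℝ J x v = ⟪gradient J x, v⟫ := by
    intro x v
    rw [gradient, InnerProductSpace.toDual_symm_apply]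
  set g := gradient J z with hgdef
  by_cases hg0 : g = 0
  · intro s _
    simpa [hg0] using hz
  have hgpos : 0 < ‖g‖ := norm_pos_iff.2 hg0
  have hg2pos : 0 < ‖g‖ ^ 2 := pow_pos hgpos 2
  set γ : ℝ → EuclideanSpace ℝ (Fin n) := fun t => z - t • g with hγdef
  set φ : ℝ → ℝ := fun t => J (γ t) with hφdef
  have hγ0 : γ 0 = z := by simp [hγdef]
  have hγderiv : ∀ t : ℝ, HasDerivAt γ (-g) t := by
    intro t
    have h1 : HasDerivAt (fun y : ℝ => y • g) ((1 : ℝ) • g) t :=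
      (hasDerivAt_id t).smul_const g
    have h2 := h1.const_sub z
    simpa using h2
  have hφderiv : ∀ t : ℝ, HasDerivAt φ (-(fderiv ℝ J (γ t) g)) t := by
    intro t
    have h1 := (hdiff (γ t)).hasFDerivAt
    have h2 := h1.comp_hasDerivAt t (hγderiv t)
    have h3 : HasDerivAt φ (fderiv ℝ J (γ t) (-g)) t := h2
    simpa using h3
  have hφcont : Continuous φ := hJc.comp
    (continuous_const.sub (continuous_id.smul continuous_const))
  have hφ0 : φ 0 = J z := by rw [hφdef]; simp only [hγ0]
  have hfzg : fderiv ℝ J z g = ‖g‖ ^ 2 := by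
    rw [hgrad z g, ← hgdef, real_inner_self_eq_norm_sq]
  -- bootstrap set
  set S := {s : ℝ | s ∈ Set.Icc (0 : ℝ) (2 / L) ∧ ∀ t ∈ Set.Icc (0 : ℝ) s, φ t ≤ c}
    with hSdef
  have h2L : (0 : ℝ) < 2 / L := by positivity
  have h0S : (0 : ℝ) ∈ S := by
    refine ⟨⟨le_rfl, h2L.le⟩, fun t ht => ?_⟩
    have ht0 : t = 0 := le_antisymm ht.2 ht.1
    rw [ht0, hφ0]; exact hz
  have hSne : S.Nonempty := ⟨0, h0S⟩
  have hSbdd : BddAbove S := ⟨2 / L, fun s hs => hs.1.2⟩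
  set T := sSup S with hTdef
  have hT0 : 0 ≤ T := le_csSup hSbdd h0S
  have hT2 : T ≤ 2 / L := csSup_le hSne fun s hs => hs.1.2
  have hTin : ∀ t ∈ Set.Icc (0 : ℝ) T, φ t ≤ c := by
    intro t ht
    rcases eq_or_lt_of_le ht.2 with heq | hlt
    · have hTc : T ∈ closure S := csSup_mem_closure hSne hSbdd
      have hsub : S ⊆ {s : ℝ | φ s ≤ c} := fun s hs => hs.2 s ⟨hs.1.1, le_rfl⟩
      have hcl : IsClosed {s : ℝ | φ s ≤ c} := isClosed_le hφcont continuous_const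
      have hmem : T ∈ {s : ℝ | φ s ≤ c} := hcl.closure_subset ((closure_mono hsub) hTc)
      rw [heq]; exact hmem
    · obtain ⟨s', hs'S, hts'⟩ := exists_lt_of_lt_csSup hSne hlt
      exact hs'S.2 t ⟨ht.1, hts'.le⟩
  -- main claim : T = 2 / L
  have hTeq : T = 2 / L := by
    by_contra hne
    have hTlt : T < 2 / L := lt_of_le_of_ne hT2 hne
    suffices hsuff : ∃ s' ∈ S, T < s' by
      obtain ⟨s', hs'S, hs'T⟩ := hsuff
      exact absurd (le_csSup hSbdd hs'S) (not_le.2 hs'T)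
    rcases eq_or_lt_of_le hT0 with hT0eq | hT0lt
    · -- T = 0 : use the strictly negative derivative at 0
      have hd0 : HasDerivAt φ (-‖g‖ ^ 2) 0 := by
        have h1 := hφderiv 0
        rw [hγ0, hfzg] at h1
        exact h1
      have hslope := hasDerivAt_iff_tendsto_slope.1 hd0
      have hne' : (-‖g‖ ^ 2 : ℝ) < 0 := by linarith
      have hneg : ∀ᶠ t in nhdsWithin (0 : ℝ) {(0 : ℝ)}ᶜ, slope φ 0 t < 0 :=
        hslope.eventually (eventually_lt_nhds hne')
      have hneg2 : ∀ᶠ t in nhdsWithin (0 : ℝ) (Set.Ioi 0), φ t < φ 0 := by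
        have hmono : nhdsWithin (0 : ℝ) (Set.Ioi 0) ≤ nhdsWithin (0 : ℝ) {(0 : ℝ)}ᶜ :=
          nhdsWithin_mono 0 fun t ht => ne_of_gt ht
        filter_upwards [hmono hneg, self_mem_nhdsWithin] with t hts htpos
        rw [slope_def_field] at hts
        have htpos' : (0 : ℝ) < t := htpos
        have h3 : (φ t - φ 0) / (t - 0) < 0 := hts
        rw [sub_zero] at h3
        have h4 := (div_neg_iff.1 h3)
        rcases h4 with ⟨_, h5⟩ | ⟨h5, _⟩
        · linarith
        · linarith
      obtain ⟨δ, hδpos, hδsub⟩ := mem_nhdsGT_iff_exists_Ioc_subset.1 hneg2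
      refine ⟨min δ (2 / L), ⟨⟨le_min hδpos.le h2L.le, min_le_right _ _⟩, ?_⟩, ?_⟩
      · intro t ht
        rcases eq_or_lt_of_le ht.1 with h0t | h0t
        · rw [← h0t, hφ0]; exact hz
        · have htδ : t ∈ Set.Ioc (0 : ℝ) δ := ⟨h0t, le_trans ht.2 (min_le_left _ _)⟩
          have h6 := hδsub htδ
          have hφ0c : φ 0 ≤ c := by rw [hφ0]; exact hz
          exact le_of_lt (lt_of_lt_of_le h6 hφ0c)
      · rw [← hT0eq]
        exact lt_min hδpos h2L
    · -- T > 0 : descent inequality gives φ T < c strictly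
      have hTne : T ≠ 0 := ne_of_gt hT0lt
      -- segment from z to γ T lies in C
      have hseg_sub : segment ℝ z (γ T) ⊆ C := by
        intro x hx
        rw [segment_eq_image] at hx
        obtain ⟨θ, hθ, rfl⟩ := hx
        have heq : (1 - θ) • z + θ • γ T = γ (θ * T) := by
          show (1 - θ) • z + θ • (z - T • g) = z - (θ * T) • g
          rw [mul_smul]
          module
        show (1 - θ) • z + θ • γ T ∈ C
        rw [heq]
        exact hTin (θ * T) ⟨mul_nonneg hθ.1 hT0, by nlinarith [hθ.1, hθ.2]⟩
      have hmemseg : ∀ t ∈ Set.Icc (0 : ℝ) T, γ t ∈ segment ℝ z (γ T) := by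
        intro t ht
        rw [segment_eq_image]
        refine ⟨t / T, ⟨div_nonneg ht.1 hT0, div_le_one_of_le₀ ht.2 hT0⟩, ?_⟩
        have h1 : t • g = (t / T) • T • g := by
          rw [smul_smul, div_mul_cancel₀ t hTne]
        show (1 - t / T) • z + (t / T) • (z - T • g) = z - t • g
        rw [h1]
        module
      have hlip : ∀ t ∈ Set.Icc (0 : ℝ) T,
          ‖fderiv ℝ J (γ t) - fderiv ℝ J z‖ ≤ L * (t * ‖g‖) := by
        intro t ht
        have hb := Convex.norm_image_sub_le_of_norm_fderiv_le
          (f := fderiv ℝ J) (s := segment ℝ z (γ T)) (C := L)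
          (fun x _ => hdiff2 x) (fun x hx => hLub x (hseg_sub hx))
          (convex_segment z (γ T)) (left_mem_segment ℝ z (γ T)) (hmemseg t ht)
        have hnorm : ‖γ t - z‖ = t * ‖g‖ := by
          show ‖z - t • g - z‖ = t * ‖g‖
          rw [sub_sub_cancel_left, norm_neg, norm_smul, Real.norm_eq_abs,
            abs_of_nonneg ht.1]
        rwa [hnorm] at hb
      -- the auxiliary antitone function
      set ψ : ℝ → ℝ := fun t => φ t + t * ‖g‖ ^ 2 - t ^ 2 * (L * ‖g‖ ^ 2 / 2) with hψdef
      have hψderiv : ∀ t : ℝ,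
          HasDerivAt ψ (-(fderiv ℝ J (γ t) g) + ‖g‖ ^ 2 - L * t * ‖g‖ ^ 2) t := by
        intro t
        have h1 : HasDerivAt (fun u : ℝ => u * ‖g‖ ^ 2) (‖g‖ ^ 2) t := by
          simpa using (hasDerivAt_id t).mul_const (‖g‖ ^ 2)
        have h2 : HasDerivAt (fun u : ℝ => u ^ 2 * (L * ‖g‖ ^ 2 / 2)) (L * t * ‖g‖ ^ 2) t := by
          have h3 : HasDerivAt (fun u : ℝ => u ^ 2 * (L * ‖g‖ ^ 2 / 2))
              ((2:ℕ) * t ^ (2 - 1) * (L * ‖g‖ ^ 2 / 2)) t :=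
            (hasDerivAt_pow 2 t).mul_const (L * ‖g‖ ^ 2 / 2)
          convert h3 using 1
          push_cast
          ring
        exact ((hφderiv t).add h1).sub h2
      have hψanti : AntitoneOn ψ (Set.Icc 0 T) := by
        apply antitoneOn_of_deriv_nonpos (convex_Icc 0 T)
        · exact ((hφcont.add (continuous_id.mul continuous_const)).sub
            ((continuous_pow 2).mul continuous_const)).continuousOn
        · intro x hx
          exact (hψderiv x).differentiableAt.differentiableWithinAt
        · intro x hx
          rw [(hψderiv x).deriv]
          rw [interior_Icc] at hx
          have hb := hlip x ⟨hx.1.le, hx.2.le⟩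
          have happ : ‖(fderiv ℝ J (γ x) - fderiv ℝ J z) g‖ ≤ L * (x * ‖g‖) * ‖g‖ :=
            le_trans ((fderiv ℝ J (γ x) - fderiv ℝ J z).le_opNorm g)
              (mul_le_mul_of_nonneg_right hb (norm_nonneg g))
          have happ2 : (fderiv ℝ J (γ x) - fderiv ℝ J z) g =
              fderiv ℝ J (γ x) g - fderiv ℝ J z g := rfl
          rw [happ2] at happ
          rw [Real.norm_eq_abs] at happ
          have h5 : -(L * (x * ‖g‖) * ‖g‖) ≤ fderiv ℝ J (γ x) g - fderiv ℝ J z g :=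
            (abs_le.1 happ).1
          rw [hfzg] at h5
          nlinarith [h5]
      have hd := hψanti (Set.left_mem_Icc.2 hT0) (Set.right_mem_Icc.2 hT0) hT0
      have hψ0 : ψ 0 = J z := by
        rw [hψdef]; simp [hφ0]
      have hψT : ψ T = φ T + T * ‖g‖ ^ 2 - T ^ 2 * (L * ‖g‖ ^ 2 / 2) := rfl
      rw [hψ0, hψT] at hd
      -- φ T < c strictly
      have hTL : T * L < 2 := by
        rw [lt_div_iff₀ hLpos] at hTlt
        linarith
      have hφT : φ T < c := by
        have hpos : 0 < T * ‖g‖ ^ 2 - T ^ 2 * (L * ‖g‖ ^ 2 / 2) := by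
          have h1 : 0 < T * ‖g‖ ^ 2 * (2 - T * L) :=
            mul_pos (mul_pos hT0lt hg2pos) (by linarith)
          nlinarith [h1]
        linarith
      have hnhds : ∀ᶠ t in nhds T, φ t < c :=
        (hφcont.continuousAt).eventually (eventually_lt_nhds hφT)
      obtain ⟨δ, hδpos, hδball⟩ := Metric.eventually_nhds_iff.1 hnhds
      refine ⟨min (T + δ / 2) (2 / L), ⟨⟨?_, min_le_right _ _⟩, ?_⟩, ?_⟩
      · exact le_min (by linarith) h2L.le
      · intro t ht
        rcases le_or_gt t T with htT | htT
        · exact hTin t ⟨ht.1, htT⟩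
        · have h7 : t ≤ T + δ / 2 := le_trans ht.2 (min_le_left _ _)
          have h8 : dist t T < δ := by
            rw [Real.dist_eq, abs_of_pos (by linarith : (0:ℝ) < t - T)]
            linarith
          exact (hδball h8).le
      · exact lt_min (by linarith) hTlt
  intro s hs
  have hres := hTin s (by rw [hTeq]; exact hs)
  exact hres
end

section
/- Let J : ℝ^n → ℝ be differentiable with globally L-Lipschitz gradient (L > 0) and bounded below with infimum J*. Let η > 0, c > 0, let λ₁ satisfy 0 < λ₁ ≤ min{ 1/(2η + c), 1/(2L), c/(2(ηL + c²)) }, and set λ₂ = (1 − λ₁ c)/η. Define V(z, v) = J(z) − J* + λ₁ ⟨v, ∇J(z)⟩ + (λ₂/2)‖v‖². Then for all z, v ∈ ℝ^n: (1/2)(J(z) − J*) + (λ₂/4)‖v‖² ≤ V(z, v) ≤ (1 + λ₁ L)(J(z) − J*) + ((λ₁ + λ₂)/2)‖v‖². In particular V is nonnegative and vanishes only where J(z) = J* and v = 0. -/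
open scoped RealInnerProductSpace


lemma descent_aux {n : ℕ} (J : EuclideanSpace ℝ (Fin n) → ℝ)
    (hJ : Differentiable ℝ J) (L : ℝ) (hL : 0 < L)
    (hLip : ∀ z₁ z₂, ‖gradient J z₁ - gradient J z₂‖ ≤ L * ‖z₁ - z₂‖)
    (x y : EuclideanSpace ℝ (Fin n)) :
    J y ≤ J x + ⟪gradient J x, y - x⟫ + L / 2 * ‖y - x‖ ^ 2 := by
  set u := y - x with hu
  set D : ℝ → ℝ := fun t => ⟪gradient J (x + t • u), u⟫ with hD
  have hcontg : Continuous (gradient J) := by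
    refine (LipschitzWith.of_dist_le_mul (K := L.toNNReal) (f := gradient J) ?_).continuous
    intro a b
    rw [dist_eq_norm, dist_eq_norm, Real.coe_toNNReal _ hL.le]
    exact hLip a b
  have hderiv : ∀ t : ℝ, HasDerivAt (fun t : ℝ => J (x + t • u)) (D t) t := by
    intro t
    have hline : HasDerivAt (fun t : ℝ => x + t • u) u t := by
      simpa using ((hasDerivAt_id t).smul_const u).const_add x
    have hF := (hJ (x + t • u)).hasGradientAt.hasFDerivAt
    have := hF.comp_hasDerivAt t hline
    simp [hD, InnerProductSpace.toDual_apply_apply] at this ⊢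
    exact this
  have hcontD : Continuous D := by
    apply Continuous.inner
    · exact hcontg.comp (continuous_const.add (continuous_id.smul continuous_const))
    · exact continuous_const
  have hftc : ∫ t in (0:ℝ)..1, D t = J (x + (1:ℝ) • u) - J (x + (0:ℝ) • u) :=
    intervalIntegral.integral_eq_sub_of_hasDerivAt (fun t _ => hderiv t)
      (hcontD.intervalIntegrable 0 1)
  have hx0 : x + (0:ℝ) • u = x := by simp
  have hy1 : x + (1:ℝ) • u = y := by simp [hu]
  have hbound : ∀ t ∈ Set.Icc (0:ℝ) 1, D t ≤ ⟪gradient J x, u⟫ + t * (L * ‖u‖ ^ 2) := by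
    intro t ht
    have h1 : D t - ⟪gradient J x, u⟫ = ⟪gradient J (x + t • u) - gradient J x, u⟫ := by
      simp [hD, inner_sub_left]
    have h2 : ⟪gradient J (x + t • u) - gradient J x, u⟫ ≤
        ‖gradient J (x + t • u) - gradient J x‖ * ‖u‖ :=
      real_inner_le_norm _ _
    have h3 : ‖gradient J (x + t • u) - gradient J x‖ ≤ L * (t * ‖u‖) := by
      have := hLip (x + t • u) x
      simpa [norm_smul, abs_of_nonneg ht.1, mul_assoc] using this
    nlinarith [norm_nonneg u, ht.1, mul_le_mul_of_nonneg_right h3 (norm_nonneg u)]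
  have hmono : ∫ t in (0:ℝ)..1, D t ≤
      ∫ t in (0:ℝ)..1, (⟪gradient J x, u⟫ + t * (L * ‖u‖ ^ 2)) := by
    apply intervalIntegral.integral_mono_on (by norm_num)
      (hcontD.intervalIntegrable 0 1)
      ((continuous_const.add (continuous_id.mul continuous_const)).intervalIntegrable 0 1)
    exact hbound
  have hcomp : ∫ t in (0:ℝ)..1, (⟪gradient J x, u⟫ + t * (L * ‖u‖ ^ 2)) =
      ⟪gradient J x, u⟫ + L / 2 * ‖u‖ ^ 2 := by
    have h1 : ∫ t in (0:ℝ)..1, (⟪gradient J x, u⟫ + t * (L * ‖u‖ ^ 2)) =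
        (∫ _t in (0:ℝ)..1, ⟪gradient J x, u⟫) + ∫ t in (0:ℝ)..1, t * (L * ‖u‖ ^ 2) :=
      intervalIntegral.integral_add intervalIntegrable_const
        ((continuous_id.mul continuous_const).intervalIntegrable 0 1)
    rw [h1, intervalIntegral.integral_mul_const, integral_id,
      intervalIntegral.integral_const]
    simp; ring
  have : J y - J x ≤ ⟪gradient J x, u⟫ + L / 2 * ‖u‖ ^ 2 := by
    rw [hx0, hy1] at hftc
    linarith [hmono.trans_eq hcomp, hftc.symm.le, hftc.le]
  linarith [this]

lemma grad_sq_aux {n : ℕ} (J : EuclideanSpace ℝ (Fin n) → ℝ)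
    (hJ : Differentiable ℝ J) (L : ℝ) (hL : 0 < L)
    (hLip : ∀ z₁ z₂, ‖gradient J z₁ - gradient J z₂‖ ≤ L * ‖z₁ - z₂‖)
    (Jstar : ℝ) (hglb : IsGLB (Set.range J) Jstar)
    (z : EuclideanSpace ℝ (Fin n)) :
    ‖gradient J z‖ ^ 2 ≤ 2 * L * (J z - Jstar) := by
  set g := gradient J z with hg
  have hd := descent_aux J hJ L hL hLip z (z - L⁻¹ • g)
  have hsub : (z - L⁻¹ • g) - z = -(L⁻¹ • g) := by abel
  rw [hsub] at hd
  have hinner : ⟪g, -(L⁻¹ • g)⟫ = -(L⁻¹ * ‖g‖ ^ 2) := by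
    rw [inner_neg_right, real_inner_smul_right, real_inner_self_eq_norm_sq]
  have hnorm : ‖-(L⁻¹ • g)‖ ^ 2 = L⁻¹ ^ 2 * ‖g‖ ^ 2 := by
    rw [norm_neg, norm_smul, mul_pow]
    congr 1
    rw [Real.norm_eq_abs, sq_abs]
  rw [hinner, hnorm] at hd
  have hJs : Jstar ≤ J (z - L⁻¹ • g) := hglb.1 ⟨_, rfl⟩
  have h2L : (0:ℝ) < 2 * L := by linarith
  have e : J z + -(L⁻¹ * ‖g‖ ^ 2) + L / 2 * (L⁻¹ ^ 2 * ‖g‖ ^ 2)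
      = J z - 1 / (2 * L) * ‖g‖ ^ 2 := by
    field_simp
    ring
  rw [e] at hd
  have key : 1 / (2 * L) * ‖g‖ ^ 2 ≤ J z - Jstar := by linarith [hJs.trans hd]
  calc ‖g‖ ^ 2 = (2 * L) * (1 / (2 * L) * ‖g‖ ^ 2) := by field_simp
    _ ≤ (2 * L) * (J z - Jstar) := by
        exact mul_le_mul_of_nonneg_left key h2L.le
    _ = 2 * L * (J z - Jstar) := by ring


/-- sandwich bounds for the mixed Lyapunov function
`V(z,v) = J(z) − J* + λ₁⟨v, ∇J(z)⟩ + (λ₂/2)‖v‖²` of the heavy-ball method, where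
`∇J` is globally `L`-Lipschitz, `J*` is the infimum of `J`,
`0 < λ₁ ≤ min{1/(2η+c), 1/(2L), c/(2(ηL+c²))}` and `λ₂ = (1 − λ₁ c)/η`. -/
theorem stmt_4 (n : ℕ) (J : EuclideanSpace ℝ (Fin n) → ℝ)
    (hJ : Differentiable ℝ J)
    (L : ℝ) (hL : 0 < L)
    (hLip : ∀ z₁ z₂, ‖gradient J z₁ - gradient J z₂‖ ≤ L * ‖z₁ - z₂‖)
    (Jstar : ℝ) (hglb : IsGLB (Set.range J) Jstar)
    (η c : ℝ) (hη : 0 < η) (hc : 0 < c)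
    (lam₁ : ℝ) (hlam₁pos : 0 < lam₁)
    (hlam₁le : lam₁ ≤ min (1 / (2 * η + c)) (min (1 / (2 * L)) (c / (2 * (η * L + c ^ 2)))))
    (lam₂ : ℝ) (hlam₂ : lam₂ = (1 - lam₁ * c) / η)
    (V : EuclideanSpace ℝ (Fin n) → EuclideanSpace ℝ (Fin n) → ℝ)
    (hV : ∀ z v, V z v = J z - Jstar + lam₁ * ⟪v, gradient J z⟫ + (lam₂ / 2) * ‖v‖ ^ 2) :
    ∀ z v,
      ((1 / 2) * (J z - Jstar) + (lam₂ / 4) * ‖v‖ ^ 2 ≤ V z v ∧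
        V z v ≤ (1 + lam₁ * L) * (J z - Jstar) + ((lam₁ + lam₂) / 2) * ‖v‖ ^ 2) ∧
      0 ≤ V z v ∧ (V z v = 0 → J z = Jstar ∧ v = 0) := by
  -- scalar preliminaries
  have h1 : lam₁ ≤ 1 / (2 * η + c) := hlam₁le.trans (min_le_left _ _)
  have h2 : lam₁ ≤ 1 / (2 * L) := hlam₁le.trans ((min_le_right _ _).trans (min_le_left _ _))
  have hden : (0:ℝ) < 2 * η + c := by linarith
  have hA : lam₁ * (2 * η + c) ≤ 1 := by
    have := (le_div_iff₀ hden).mp h1; linarith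
  have hB : lam₁ * (2 * L) ≤ 1 := by
    have := (le_div_iff₀ (by linarith : (0:ℝ) < 2 * L)).mp h2; linarith
  have hlam₂ge : 2 * lam₁ ≤ lam₂ := by
    rw [hlam₂, le_div_iff₀ hη]; nlinarith
  have hlam₂pos : 0 < lam₂ := lt_of_lt_of_le (by linarith) hlam₂ge
  have h4L : 4 * L * lam₁ ^ 2 ≤ lam₂ := by nlinarith
  intro z v
  have ha : Jstar ≤ J z := hglb.1 ⟨z, rfl⟩
  have hg2 : ‖gradient J z‖ ^ 2 ≤ 2 * L * (J z - Jstar) :=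
    grad_sq_aux J hJ L hL hLip Jstar hglb z
  have hIabs : |⟪v, gradient J z⟫| ≤ ‖v‖ * ‖gradient J z‖ := abs_real_inner_le_norm v _
  obtain ⟨hIl, hIu⟩ := abs_le.mp hIabs
  have hnv : (0:ℝ) ≤ ‖v‖ := norm_nonneg v
  have hng : (0:ℝ) ≤ ‖gradient J z‖ := norm_nonneg _
  have hlow : (1 / 2) * (J z - Jstar) + (lam₂ / 4) * ‖v‖ ^ 2 ≤ V z v := by
    rw [hV]
    nlinarith [sq_nonneg (2 * lam₁ * L * ‖v‖ - ‖gradient J z‖),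
      mul_le_mul_of_nonneg_left hIl hlam₁pos.le,
      mul_le_mul_of_nonneg_left h4L (mul_nonneg hL.le (sq_nonneg ‖v‖)),
      mul_nonneg (mul_nonneg hL.le (sq_nonneg lam₁)) (sq_nonneg ‖v‖), hg2, sq_nonneg ‖v‖]
  have hup : V z v ≤ (1 + lam₁ * L) * (J z - Jstar) + ((lam₁ + lam₂) / 2) * ‖v‖ ^ 2 := by
    rw [hV]
    nlinarith [mul_le_mul_of_nonneg_left hIu hlam₁pos.le,
      mul_le_mul_of_nonneg_left hg2 hlam₁pos.le,
      mul_le_mul_of_nonneg_left (sq_nonneg (‖v‖ - ‖gradient J z‖)) hlam₁pos.le]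
  refine ⟨⟨hlow, hup⟩, ?_, ?_⟩
  · have h0 : (0:ℝ) ≤ (1 / 2) * (J z - Jstar) + (lam₂ / 4) * ‖v‖ ^ 2 := by
      have := mul_nonneg (by linarith : (0:ℝ) ≤ lam₂ / 4) (sq_nonneg ‖v‖)
      linarith
    linarith
  · intro hV0
    have hle : (1 / 2) * (J z - Jstar) + (lam₂ / 4) * ‖v‖ ^ 2 ≤ 0 := hV0 ▸ hlow
    have ht1 : (0:ℝ) ≤ (1 / 2) * (J z - Jstar) := by linarith
    have ht2 : (0:ℝ) ≤ (lam₂ / 4) * ‖v‖ ^ 2 :=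
      mul_nonneg (by linarith) (sq_nonneg _)
    have hJz : J z = Jstar := by linarith
    have hv : ‖v‖ ^ 2 = 0 := by
      by_contra h
      have : 0 < (lam₂ / 4) * ‖v‖ ^ 2 := by
        have := lt_of_le_of_ne (sq_nonneg ‖v‖) (Ne.symm h)
        exact mul_pos (by linarith) this
      linarith
    exact ⟨hJz, by simpa using (pow_eq_zero_iff (by norm_num)).mp hv⟩
end

section
/- Suppose the dataset is nonseparable. Then the logistic loss J is coercive on ℝ^n, i.e., J(θ) → ∞ as ‖θ‖ → ∞. -/
open scoped RealInnerProductSpace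
open Filter Real

/-- Key scalar bound: each logistic loss term dominates the (signed) margin and 0. -/
lemma logistic_term_bound (s yi : ℝ) (hy : yi = 0 ∨ yi = 1)
    (σ : ℝ → ℝ) (hσ : ∀ s, σ s = 1 / (1 + Real.exp (-s))) :
    max (if yi = 1 then -s else s) 0 ≤
      -(yi * Real.log (σ s) + (1 - yi) * Real.log (1 - σ s)) := by
  have he : 0 < Real.exp (-s) := Real.exp_pos _
  have h1 : (0:ℝ) < 1 + Real.exp (-s) := by linarith
  have hlogσ : Real.log (σ s) = -Real.log (1 + Real.exp (-s)) := by
    rw [hσ, one_div, Real.log_inv]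
  have h1σ : 1 - σ s = Real.exp (-s) / (1 + Real.exp (-s)) := by
    rw [hσ]; field_simp; ring
  have hlog1σ : Real.log (1 - σ s) = -s - Real.log (1 + Real.exp (-s)) := by
    rw [h1σ, Real.log_div he.ne' h1.ne', Real.log_exp]
  have hA : 0 ≤ Real.log (1 + Real.exp (-s)) := Real.log_nonneg (by linarith)
  have hB : -s ≤ Real.log (1 + Real.exp (-s)) := by
    have := Real.log_le_log he (by linarith : Real.exp (-s) ≤ 1 + Real.exp (-s))
    rwa [Real.log_exp] at this
  rcases hy with h | h
  · subst h
    rw [show (if (0:ℝ) = 1 then -s else s) = s from if_neg (by norm_num), hlog1σ,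
      max_le_iff]
    constructor <;> nlinarith
  · subst h
    rw [show (if (1:ℝ) = 1 then -s else s) = -s from if_pos rfl, hlogσ, max_le_iff]
    constructor <;> nlinarith

/-- if the dataset is nonseparable, the logistic loss is coercive on `ℝⁿ`. -/
theorem stmt_7 (n N : ℕ) (hN : 1 ≤ N)
    (x : Fin N → EuclideanSpace ℝ (Fin n)) (y : Fin N → ℝ)
    (hy : ∀ i, y i = 0 ∨ y i = 1)
    (σ : ℝ → ℝ) (hσ : ∀ s, σ s = 1 / (1 + Real.exp (-s)))
    (J : EuclideanSpace ℝ (Fin n) → ℝ)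
    (hJ : ∀ θ, J θ = -(1 / (N : ℝ)) * ∑ i, (y i * Real.log (σ ⟪θ, x i⟫) +
      (1 - y i) * Real.log (1 - σ ⟪θ, x i⟫)))
    (hns : ¬ ∃ v : EuclideanSpace ℝ (Fin n), v ≠ 0 ∧
      (∀ i, y i = 1 → 0 ≤ ⟪v, x i⟫) ∧ (∀ i, y i = 0 → ⟪v, x i⟫ ≤ 0)) :
    Filter.Tendsto J (Filter.cocompact (EuclideanSpace ℝ (Fin n))) Filter.atTop := by
  classical
  rcases subsingleton_or_nontrivial (EuclideanSpace ℝ (Fin n)) with hsub | hnt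
  · haveI : Finite (EuclideanSpace ℝ (Fin n)) := Finite.of_subsingleton
    rw [Filter.cocompact_eq_bot]
    exact tendsto_bot
  -- margin function
  set m : Fin N → EuclideanSpace ℝ (Fin n) → ℝ :=
    fun i θ => if y i = 1 then -⟪θ, x i⟫ else ⟪θ, x i⟫ with hm
  have hNpos : (0:ℝ) < N := by exact_mod_cast hN
  -- per-term bound: for each θ and each i, the negated term dominates max (m i θ) 0
  have hterm : ∀ (θ) (i : Fin N), max (m i θ) 0 ≤
      -(y i * Real.log (σ ⟪θ, x i⟫) + (1 - y i) * Real.log (1 - σ ⟪θ, x i⟫)) :=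
    fun θ i => logistic_term_bound _ _ (hy i) σ hσ
  -- J θ ≥ (1/N) * m j θ for every j
  have hJge : ∀ (θ) (j : Fin N), (1 / (N:ℝ)) * m j θ ≤ J θ := by
    intro θ j
    rw [hJ]
    have hsum : m j θ ≤ -∑ i, (y i * Real.log (σ ⟪θ, x i⟫) +
        (1 - y i) * Real.log (1 - σ ⟪θ, x i⟫)) := by
      rw [← Finset.sum_neg_distrib]
      calc m j θ ≤ max (m j θ) 0 := le_max_left _ _
        _ ≤ -(y j * Real.log (σ ⟪θ, x j⟫) +
              (1 - y j) * Real.log (1 - σ ⟪θ, x j⟫)) := hterm θ j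
        _ ≤ _ := Finset.single_le_sum (f := fun i => -(y i * Real.log (σ ⟪θ, x i⟫) +
              (1 - y i) * Real.log (1 - σ ⟪θ, x i⟫)))
            (fun i _ => le_trans (le_max_right (m i θ) 0) (hterm θ i)) (Finset.mem_univ j)
    calc (1 / (N:ℝ)) * m j θ ≤ (1 / (N:ℝ)) * -∑ i, (y i * Real.log (σ ⟪θ, x i⟫) +
          (1 - y i) * Real.log (1 - σ ⟪θ, x i⟫)) :=
          mul_le_mul_of_nonneg_left hsum (by positivity)
      _ = _ := by ring
  -- sup of margins over the unit sphere
  haveI : NeZero N := ⟨by omega⟩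
  have hNe : (Finset.univ : Finset (Fin N)).Nonempty := Finset.univ_nonempty
  set φ : EuclideanSpace ℝ (Fin n) → ℝ :=
    fun v => Finset.univ.sup' hNe (fun i => m i v) with hφ
  have hφc : Continuous φ := by
    apply Continuous.finset_sup'_apply hNe
    intro i _
    have hc : Continuous fun v : EuclideanSpace ℝ (Fin n) => ⟪v, x i⟫ :=
      continuous_inner.comp (Continuous.prodMk_left (x i))
    by_cases h : y i = 1 <;> simp only [hm, h, if_true, if_false]
    · exact hc.neg
    · exact hc
  -- positive lower bound on the sphere
  have hK : IsCompact (Metric.sphere (0 : EuclideanSpace ℝ (Fin n)) 1) :=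
    isCompact_sphere 0 1
  have hKne : (Metric.sphere (0 : EuclideanSpace ℝ (Fin n)) 1).Nonempty :=
    NormedSpace.sphere_nonempty.mpr zero_le_one
  obtain ⟨v0, hv0mem, hv0min⟩ := hK.exists_isMinOn hKne hφc.continuousOn
  set δ := φ v0 with hδdef
  have hδpos : 0 < δ := by
    by_contra hle
    push_neg at hle
    apply hns
    refine ⟨v0, ?_, ?_, ?_⟩
    · intro h0
      have : ‖v0‖ = 1 := mem_sphere_zero_iff_norm.mp hv0mem
      rw [h0] at this; simp at this
    · intro i hi
      have hle2 : m i v0 ≤ δ := by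
        rw [hδdef, hφ]; exact Finset.le_sup' (fun i => m i v0) (Finset.mem_univ i)
      have h2 : m i v0 ≤ 0 := hle2.trans hle
      rw [hm] at h2; simp only [hi, eq_self_iff_true, if_true] at h2
      linarith
    · intro i hi
      have hle2 : m i v0 ≤ δ := by
        rw [hδdef, hφ]; exact Finset.le_sup' (fun i => m i v0) (Finset.mem_univ i)
      have h2 : m i v0 ≤ 0 := hle2.trans hle
      rw [hm] at h2
      simp only [hi] at h2
      rwa [if_neg (by norm_num)] at h2
  -- global lower bound : δ/N * ‖θ‖ ≤ J θ
  have hbound : ∀ θ, δ / N * ‖θ‖ ≤ J θ := by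
    intro θ
    by_cases hθ : θ = 0
    · subst hθ
      simp only [norm_zero, mul_zero]
      have := hJge 0 ⟨0, by omega⟩
      have h0 : (0:ℝ) ≤ max (m ⟨0, by omega⟩ 0) 0 := le_max_right _ _
      have hmz : m ⟨0, by omega⟩ (0 : EuclideanSpace ℝ (Fin n)) = 0 := by
        rw [hm]; simp
      calc (0:ℝ) = 1 / N * m ⟨0, by omega⟩ (0 : EuclideanSpace ℝ (Fin n)) := by
            rw [hmz]; ring
        _ ≤ J 0 := hJge 0 _
    · have hnθ : 0 < ‖θ‖ := norm_pos_iff.mpr hθ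
      set v := ‖θ‖⁻¹ • θ with hv
      have hvmem : v ∈ Metric.sphere (0 : EuclideanSpace ℝ (Fin n)) 1 := by
        rw [mem_sphere_zero_iff_norm, hv, norm_smul, norm_inv, norm_norm,
          inv_mul_cancel₀ hnθ.ne']
      have hφv : δ ≤ φ v := hv0min hvmem
      obtain ⟨j, _, hj⟩ := Finset.exists_mem_eq_sup' hNe (fun i => m i v)
      have hjv : δ ≤ m j v := by rw [← hj]; exact hφv
      have hlin : m j θ = ‖θ‖ * m j v := by
        rw [hm]
        have : ⟪v, x j⟫ = ‖θ‖⁻¹ * ⟪θ, x j⟫ := by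
          rw [hv, real_inner_smul_left]
        by_cases h : y j = 1 <;> simp only [h, if_true, if_false, this] <;>
          field_simp <;> ring
      have : δ / N * ‖θ‖ ≤ 1 / N * m j θ := by
        rw [hlin]
        have h2 := mul_le_mul_of_nonneg_left (mul_le_mul_of_nonneg_left hjv hnθ.le)
          (le_of_lt (one_div_pos.mpr hNpos))
        calc δ / N * ‖θ‖ = 1 / N * (‖θ‖ * δ) := by ring
          _ ≤ 1 / N * (‖θ‖ * m j v) := h2
      exact this.trans (hJge θ j)
  -- conclude
  have hc : (0:ℝ) < δ / N := div_pos hδpos hNpos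
  have htend : Filter.Tendsto (fun θ : EuclideanSpace ℝ (Fin n) => δ / N * ‖θ‖)
      (Filter.cocompact _) Filter.atTop :=
    (tendsto_norm_cocompact_atTop).const_mul_atTop hc
  exact Filter.tendsto_atTop_mono hbound htend
end

section
/- Suppose the dataset is full rank and nonseparable, and let J* = inf_θ J(θ) (which is attained). Then the logistic loss satisfies the K-PL condition: there exists a class K function μ (i.e., μ : ℝ_{≥0} → ℝ_{≥0} continuous, strictly increasing, with μ(0) = 0) such that ‖∇J(θ)‖ ≥ μ( J(θ) − J* ) for all θ ∈ ℝ^n. -/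
open scoped RealInnerProductSpace

private lemma hd_logexp (s : ℝ) : HasDerivAt (fun t => Real.log (1 + Real.exp t))
    (Real.exp s / (1 + Real.exp s)) s := by
  have h : (1 : ℝ) + Real.exp s ≠ 0 := by positivity
  simpa using ((Real.hasDerivAt_exp s).const_add 1).log h

private lemma hd_sg (u : ℝ) : HasDerivAt (fun s => Real.exp s / (1 + Real.exp s))
    (Real.exp u / (1 + Real.exp u) ^ 2) u := by
  have h : (1 : ℝ) + Real.exp u ≠ 0 := by positivity
  have h2 := (Real.hasDerivAt_exp u).fun_div ((Real.hasDerivAt_exp u).const_add 1) h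
  exact h2.congr_deriv (by rw [mul_add, mul_one, add_sub_cancel_right])

private lemma convex_term (a b c : ℝ) :
    ConvexOn ℝ Set.univ fun t : ℝ => Real.log (1 + Real.exp (a + b * t)) - c * (a + b * t) := by
  have hab : ∀ t : ℝ, HasDerivAt (fun t : ℝ => a + b * t) b t := fun t => by
    simpa using ((hasDerivAt_id t).const_mul b).const_add a
  have hf : ∀ t : ℝ, HasDerivAt
      (fun t : ℝ => Real.log (1 + Real.exp (a + b * t)) - c * (a + b * t))
      (Real.exp (a + b * t) / (1 + Real.exp (a + b * t)) * b - c * b) t := by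
    intro t
    have h1 : HasDerivAt (fun t : ℝ => Real.log (1 + Real.exp (a + b * t)))
        (Real.exp (a + b * t) / (1 + Real.exp (a + b * t)) * b) t := by
      simpa [Function.comp_def] using (hd_logexp (a + b * t)).comp t (hab t)
    exact h1.sub ((hab t).const_mul c)
  have hderiv : (deriv fun t : ℝ => Real.log (1 + Real.exp (a + b * t)) - c * (a + b * t)) =
      fun t => Real.exp (a + b * t) / (1 + Real.exp (a + b * t)) * b - c * b :=
    funext fun t => (hf t).deriv
  have hf2 : ∀ t : ℝ, HasDerivAt
      (fun t : ℝ => Real.exp (a + b * t) / (1 + Real.exp (a + b * t)) * b - c * b)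
      (Real.exp (a + b * t) / (1 + Real.exp (a + b * t)) ^ 2 * b * b) t := by
    intro t
    have h1 : HasDerivAt (fun t : ℝ => Real.exp (a + b * t) / (1 + Real.exp (a + b * t)))
        (Real.exp (a + b * t) / (1 + Real.exp (a + b * t)) ^ 2 * b) t := by
      simpa [Function.comp_def] using (hd_sg (a + b * t)).comp t (hab t)
    simpa using (h1.mul_const b).sub_const (c * b)
  apply convexOn_univ_of_deriv2_nonneg
  · exact fun t => (hf t).differentiableAt
  · rw [hderiv]; exact fun t => (hf2 t).differentiableAt
  · intro t
    have heq : deriv^[2] (fun t : ℝ => Real.log (1 + Real.exp (a + b * t)) - c * (a + b * t)) t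
        = Real.exp (a + b * t) / (1 + Real.exp (a + b * t)) ^ 2 * b * b := by
      simp only [Function.iterate_succ, Function.iterate_zero, Function.comp, id_eq]
      rw [hderiv]
      exact (hf2 t).deriv
    rw [heq]
    have h := Real.exp_pos (a + b * t)
    have h2 : (0:ℝ) < (1 + Real.exp (a + b * t)) ^ 2 := by positivity
    nlinarith [mul_nonneg (le_of_lt (div_pos h h2)) (mul_self_nonneg b)]

private lemma le_logexp (s : ℝ) : max s 0 ≤ Real.log (1 + Real.exp s) := by
  have he := Real.exp_pos s
  refine max_le ?_ ?_
  · calc s = Real.log (Real.exp s) := (Real.log_exp s).symm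
      _ ≤ _ := Real.log_le_log (Real.exp_pos s) (by linarith)
  · have := Real.log_le_log one_pos (by linarith : (1:ℝ) ≤ 1 + Real.exp s)
    simpa using this

private lemma logexp_sub (s : ℝ) :
    Real.log (1 + Real.exp s) - s = Real.log (1 + Real.exp (-s)) := by
  have key : 1 + Real.exp s = (1 + Real.exp (-s)) * Real.exp s := by
    rw [add_mul, one_mul, ← Real.exp_add]
    simp [add_comm]
  rw [key, Real.log_mul (by positivity) (Real.exp_ne_zero s), Real.log_exp]
  ring

private lemma term_eq (σ : ℝ → ℝ) (hσ : ∀ s, σ s = 1 / (1 + Real.exp (-s))) (c s : ℝ) :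
    -(c * Real.log (σ s) + (1 - c) * Real.log (1 - σ s)) = Real.log (1 + Real.exp s) - c * s := by
  have h0 : (0:ℝ) < 1 + Real.exp (-s) := by positivity
  have h2 : 1 - σ s = Real.exp (-s) / (1 + Real.exp (-s)) := by
    rw [hσ s]; field_simp; ring
  rw [h2, hσ s, one_div, Real.log_inv, Real.log_div (Real.exp_ne_zero _) h0.ne', Real.log_exp]
  have h3 : Real.log (1 + Real.exp (-s)) = Real.log (1 + Real.exp s) - s := by
    have := logexp_sub s; linarith
  rw [h3]; ring

private lemma convexOn_finset_sum {ι : Type*} (g : ι → ℝ → ℝ) (s : Finset ι)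
    (hg : ∀ i ∈ s, ConvexOn ℝ Set.univ (g i)) :
    ConvexOn ℝ Set.univ (fun t => ∑ i ∈ s, g i t) := by
  classical
  induction s using Finset.cons_induction with
  | empty => simpa using convexOn_const (0:ℝ) convex_univ
  | cons a s ha ih =>
    simp only [Finset.sum_cons]
    exact (hg a (Finset.mem_cons_self a s)).add
      (ih fun i hi => hg i (Finset.mem_cons.2 (Or.inr hi)))

set_option maxHeartbeats 1000000 in
/-- if the dataset is full rank and nonseparable, the logistic loss
satisfies the `K`-PL condition: there is a class-`K` function `μ`
(continuous, strictly increasing, `μ(0) = 0`, nonnegative on `ℝ≥0`) with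
`‖∇J(θ)‖ ≥ μ(J(θ) − J*)` for all `θ`, where `J*` is the attained infimum of `J`. -/
theorem stmt_11 (n N : ℕ) (hN : 1 ≤ N)
    (x : Fin N → EuclideanSpace ℝ (Fin n)) (y : Fin N → ℝ)
    (hy : ∀ i, y i = 0 ∨ y i = 1)
    (σ : ℝ → ℝ) (hσ : ∀ s, σ s = 1 / (1 + Real.exp (-s)))
    (J : EuclideanSpace ℝ (Fin n) → ℝ)
    (hJ : ∀ θ, J θ = -(1 / (N : ℝ)) * ∑ i, (y i * Real.log (σ ⟪θ, x i⟫) +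
      (1 - y i) * Real.log (1 - σ ⟪θ, x i⟫)))
    (hfullrank : Submodule.span ℝ (Set.range x) = ⊤)
    (hns : ¬ ∃ v : EuclideanSpace ℝ (Fin n), v ≠ 0 ∧
      (∀ i, y i = 1 → 0 ≤ ⟪v, x i⟫) ∧ (∀ i, y i = 0 → ⟪v, x i⟫ ≤ 0))
    (Jstar : ℝ) (hglb : IsGLB (Set.range J) Jstar) (hatt : ∃ θ, J θ = Jstar) :
    ∃ μ : ℝ → ℝ, ContinuousOn μ (Set.Ici (0 : ℝ)) ∧ StrictMonoOn μ (Set.Ici (0 : ℝ)) ∧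
      μ 0 = 0 ∧ (∀ r : ℝ, 0 ≤ r → 0 ≤ μ r) ∧
      ∀ θ : EuclideanSpace ℝ (Fin n), μ (J θ - Jstar) ≤ ‖gradient J θ‖ := by
  classical
  have hN0 : (0:ℝ) < N := by exact_mod_cast hN
  -- rewrite J in a convenient form
  have hJ' : ∀ θ, J θ = (N:ℝ)⁻¹ * ∑ i,
      (Real.log (1 + Real.exp ⟪x i, θ⟫) - y i * ⟪x i, θ⟫) := by
    intro θ
    rw [hJ θ]
    have hterms : ∀ i : Fin N,
        -(y i * Real.log (σ ⟪θ, x i⟫) + (1 - y i) * Real.log (1 - σ ⟪θ, x i⟫)) =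
        Real.log (1 + Real.exp ⟪x i, θ⟫) - y i * ⟪x i, θ⟫ := by
      intro i
      rw [real_inner_comm θ (x i)]
      exact term_eq σ hσ (y i) _
    calc -(1 / (N:ℝ)) * ∑ i, (y i * Real.log (σ ⟪θ, x i⟫) +
          (1 - y i) * Real.log (1 - σ ⟪θ, x i⟫))
        = (N:ℝ)⁻¹ * ∑ i, -(y i * Real.log (σ ⟪θ, x i⟫) +
          (1 - y i) * Real.log (1 - σ ⟪θ, x i⟫)) := by
          rw [Finset.sum_neg_distrib]; ring
      _ = _ := by rw [Finset.sum_congr rfl fun i _ => hterms i]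
  have hJfun : J = fun θ => (N:ℝ)⁻¹ * ∑ i,
      (Real.log (1 + Real.exp ⟪x i, θ⟫) - y i * ⟪x i, θ⟫) := funext hJ'
  subst hJfun
  set J : EuclideanSpace ℝ (Fin n) → ℝ := fun θ => (N:ℝ)⁻¹ * ∑ i,
      (Real.log (1 + Real.exp ⟪x i, θ⟫) - y i * ⟪x i, θ⟫) with hJdef
  obtain ⟨θs, hθs⟩ := hatt
  -- the gradient
  set G : EuclideanSpace ℝ (Fin n) → EuclideanSpace ℝ (Fin n) := fun θ =>
    (N:ℝ)⁻¹ • ∑ i, (Real.exp ⟪x i, θ⟫ / (1 + Real.exp ⟪x i, θ⟫) - y i) • x i with hGdef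
  have hgrad : ∀ θ, HasGradientAt J (G θ) θ := by
    intro θ
    have hterm : ∀ i : Fin N, HasFDerivAt
        (fun θ' : EuclideanSpace ℝ (Fin n) => Real.log (1 + Real.exp ⟪x i, θ'⟫) - y i * ⟪x i, θ'⟫)
        ((Real.exp ⟪x i, θ⟫ / (1 + Real.exp ⟪x i, θ⟫) - y i) • (innerSL ℝ (x i))) θ := by
      intro i
      have hlin : HasFDerivAt (fun θ' : EuclideanSpace ℝ (Fin n) => (⟪x i, θ'⟫ : ℝ))
          (innerSL ℝ (x i)) θ := (innerSL ℝ (x i)).hasFDerivAt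
      have h1 : HasFDerivAt
          (fun θ' : EuclideanSpace ℝ (Fin n) => Real.log (1 + Real.exp ⟪x i, θ'⟫))
          ((Real.exp ⟪x i, θ⟫ / (1 + Real.exp ⟪x i, θ⟫)) • (innerSL ℝ (x i))) θ := by
        simpa [Function.comp_def] using (hd_logexp (⟪x i, θ⟫ : ℝ)).comp_hasFDerivAt θ hlin
      have h2 : HasFDerivAt (fun θ' : EuclideanSpace ℝ (Fin n) => y i * ⟪x i, θ'⟫)
          (y i • innerSL ℝ (x i)) θ := by
        simpa using hlin.const_mul (y i)
      simpa [sub_smul] using h1.fun_sub h2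
    have hsum := HasFDerivAt.fun_sum (u := Finset.univ) (fun i _ => hterm i)
    have hJd := hsum.const_mul (N:ℝ)⁻¹
    apply hasGradientAt_iff_hasFDerivAt.mpr
    have htd : (InnerProductSpace.toDual ℝ _) (G θ) =
        (N:ℝ)⁻¹ • ∑ i : Fin N,
          (Real.exp ⟪x i, θ⟫ / (1 + Real.exp ⟪x i, θ⟫) - y i) • innerSL ℝ (x i) := by
      ext w
      simp [hGdef, InnerProductSpace.toDual_apply_apply, sum_inner, real_inner_smul_left]
    rw [htd]
    exact hJd
  have hgradeq : ∀ θ, gradient J θ = G θ := fun θ => (hgrad θ).gradient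
  have hinner : ∀ θ w, ⟪G θ, w⟫ = (N:ℝ)⁻¹ * ∑ i,
      (Real.exp ⟪x i, θ⟫ / (1 + Real.exp ⟪x i, θ⟫) - y i) * ⟪x i, w⟫ := by
    intro θ w
    rw [hGdef]
    simp only
    rw [real_inner_smul_left, sum_inner]
    congr 1
    refine Finset.sum_congr rfl fun i _ => ?_
    rw [real_inner_smul_left]
  -- convexity inequality : J θ - J θs ≤ ⟪G θ, θ - θs⟫
  have hkey : ∀ θ, J θ - J θs ≤ ⟪G θ, θ - θs⟫ := by
    intro θ
    set ψ : ℝ → ℝ := fun t => (N:ℝ)⁻¹ * ∑ i,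
      (Real.log (1 + Real.exp (⟪x i, θs⟫ + ⟪x i, θ - θs⟫ * t))
        - y i * (⟪x i, θs⟫ + ⟪x i, θ - θs⟫ * t)) with hψ
    have hab1 : ∀ i : Fin N, ⟪x i, θs⟫ + ⟪x i, θ - θs⟫ * (1:ℝ) = ⟪x i, θ⟫ := fun i => by
      rw [inner_sub_right]; ring
    have hψ1 : ψ 1 = J θ := by
      rw [hψ, hJdef]; simp only [hab1]
    have hψ0 : ψ 0 = J θs := by
      rw [hψ, hJdef]; simp
    have hconv : ConvexOn ℝ Set.univ ψ := by
      have h1 := convexOn_finset_sum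
        (fun i t => Real.log (1 + Real.exp (⟪x i, θs⟫ + ⟪x i, θ - θs⟫ * t))
          - y i * (⟪x i, θs⟫ + ⟪x i, θ - θs⟫ * t)) Finset.univ
        (fun i _ => convex_term _ _ _)
      have h2 := h1.smul (c := (N:ℝ)⁻¹) (by positivity)
      simpa [hψ, smul_eq_mul] using h2
    have hD : HasDerivAt ψ (⟪G θ, θ - θs⟫) 1 := by
      have h1 : ∀ i : Fin N, HasDerivAt
          (fun t : ℝ => Real.log (1 + Real.exp (⟪x i, θs⟫ + ⟪x i, θ - θs⟫ * t))
            - y i * (⟪x i, θs⟫ + ⟪x i, θ - θs⟫ * t))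
          ((Real.exp ⟪x i, θ⟫ / (1 + Real.exp ⟪x i, θ⟫) - y i) * ⟪x i, θ - θs⟫) 1 := by
        intro i
        have hab : HasDerivAt (fun t : ℝ => ⟪x i, θs⟫ + ⟪x i, θ - θs⟫ * t)
            (⟪x i, θ - θs⟫ : ℝ) 1 := by
          simpa using
            ((hasDerivAt_id (1:ℝ)).const_mul (⟪x i, θ - θs⟫ : ℝ)).const_add (⟪x i, θs⟫ : ℝ)
        have hlog : HasDerivAt
            (fun t : ℝ => Real.log (1 + Real.exp (⟪x i, θs⟫ + ⟪x i, θ - θs⟫ * t)))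
            (Real.exp ⟪x i, θ⟫ / (1 + Real.exp ⟪x i, θ⟫) * ⟪x i, θ - θs⟫) 1 := by
          have := (hd_logexp (⟪x i, θs⟫ + ⟪x i, θ - θs⟫ * 1)).comp 1 hab
          rw [hab1 i] at this
          simpa [Function.comp_def] using this
        have := hlog.fun_sub (hab.const_mul (y i))
        exact this.congr_deriv (by ring)
      have hsum := HasDerivAt.fun_sum (u := Finset.univ) (fun i _ => h1 i)
      have h2 := hsum.const_mul (N:ℝ)⁻¹
      rw [hψ]
      exact h2.congr_deriv (hinner θ (θ - θs)).symm
    have hslope := hconv.slope_le_of_hasDerivAt (Set.mem_univ (0:ℝ)) (Set.mem_univ (1:ℝ))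
      one_pos hD
    rw [slope_def_field, sub_zero, div_one] at hslope
    rw [← hψ1, ← hψ0]
    linarith
  -- coercivity
  have hcoer : ∃ c : ℝ, 0 < c ∧ ∀ θ, c * ‖θ‖ ≤ J θ := by
    set G0 : EuclideanSpace ℝ (Fin n) → ℝ :=
      fun v => ∑ i, max ((1 - 2 * y i) * ⟪x i, v⟫) 0 with hG0
    have hterm_lb : ∀ (i : Fin N) (θ : EuclideanSpace ℝ (Fin n)),
        max ((1 - 2 * y i) * ⟪x i, θ⟫) 0 ≤
          Real.log (1 + Real.exp ⟪x i, θ⟫) - y i * ⟪x i, θ⟫ := by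
      intro i θ
      rcases hy i with h | h <;> rw [h]
      · have := le_logexp (⟪x i, θ⟫ : ℝ)
        have e : (1 - 2 * (0:ℝ)) * ⟪x i, θ⟫ = ⟪x i, θ⟫ := by ring
        rw [e]; linarith [this]
      · have h2 := le_logexp (-(⟪x i, θ⟫ : ℝ))
        have h3 := logexp_sub (⟪x i, θ⟫ : ℝ)
        have e : (1 - 2 * (1:ℝ)) * ⟪x i, θ⟫ = -(⟪x i, θ⟫ : ℝ) := by ring
        rw [e]; linarith
    have hG0nonneg : ∀ v, 0 ≤ G0 v := fun v => Finset.sum_nonneg fun i _ => le_max_right _ _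
    have hJ_lb : ∀ θ, (N:ℝ)⁻¹ * G0 θ ≤ J θ := by
      intro θ
      rw [hJdef, hG0]
      exact mul_le_mul_of_nonneg_left (Finset.sum_le_sum fun i _ => hterm_lb i θ) (by positivity)
    have hJ0 : ∀ θ, 0 ≤ J θ := fun θ =>
      le_trans (by positivity)
        (le_trans (mul_le_mul_of_nonneg_left (hG0nonneg θ) (by positivity)) (hJ_lb θ))
    rcases Nat.eq_zero_or_pos n with hn | hn
    · refine ⟨1, one_pos, fun θ => ?_⟩
      have hθ : ‖θ‖ = 0 := by
        subst hn
        simp [EuclideanSpace.norm_eq]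
      rw [hθ, mul_zero]; exact hJ0 θ
    · have hGcont : Continuous G0 := by
        apply continuous_finset_sum
        intro i _
        exact (continuous_const.mul (continuous_const.inner continuous_id)).max continuous_const
      have hsne : (Metric.sphere (0 : EuclideanSpace ℝ (Fin n)) 1).Nonempty := by
        refine ⟨EuclideanSpace.single ⟨0, hn⟩ 1, ?_⟩
        simp [EuclideanSpace.norm_single]
      obtain ⟨v0, hv0mem, hv0min⟩ :=
        (isCompact_sphere (0 : EuclideanSpace ℝ (Fin n)) 1).exists_isMinOn hsne
          hGcont.continuousOn
      have hv0norm : ‖v0‖ = 1 := by simpa using hv0mem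
      have hc0pos : 0 < G0 v0 := by
        rcases lt_or_eq_of_le (hG0nonneg v0) with h | h
        · exact h
        exfalso
        apply hns
        have hall : ∀ i ∈ Finset.univ, max ((1 - 2 * y i) * ⟪x i, v0⟫) 0 = 0 :=
          (Finset.sum_eq_zero_iff_of_nonneg (fun i _ => le_max_right _ _)).1 h.symm
        refine ⟨v0, ?_, ?_, ?_⟩
        · intro hv; rw [hv] at hv0norm; simp at hv0norm
        · intro i hi
          have h1 : (1 - 2 * y i) * ⟪x i, v0⟫ ≤ 0 := by
            have := le_max_left ((1 - 2 * y i) * ⟪x i, v0⟫) 0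
            rw [hall i (Finset.mem_univ i)] at this; exact this
          rw [hi] at h1
          rw [real_inner_comm]
          linarith
        · intro i hi
          have h1 : (1 - 2 * y i) * ⟪x i, v0⟫ ≤ 0 := by
            have := le_max_left ((1 - 2 * y i) * ⟪x i, v0⟫) 0
            rw [hall i (Finset.mem_univ i)] at this; exact this
          rw [hi] at h1
          rw [real_inner_comm]
          linarith
      refine ⟨(N:ℝ)⁻¹ * G0 v0, by positivity, fun θ => ?_⟩
      rcases eq_or_ne θ 0 with rfl | hθ
      · simpa using hJ0 0
      · have hnθ : 0 < ‖θ‖ := norm_pos_iff.2 hθ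
        set v : EuclideanSpace ℝ (Fin n) := ‖θ‖⁻¹ • θ with hvdef
        have hvmem : v ∈ Metric.sphere (0 : EuclideanSpace ℝ (Fin n)) 1 := by
          simp [hvdef, norm_smul, abs_of_nonneg (inv_nonneg.2 (norm_nonneg θ)),
            inv_mul_cancel₀ hnθ.ne']
        have hGv : G0 v0 ≤ G0 v := hv0min hvmem
        have hθv : θ = ‖θ‖ • v := by
          rw [hvdef, smul_smul, mul_inv_cancel₀ hnθ.ne', one_smul]
        have hhom : G0 θ = ‖θ‖ * G0 v := by
          rw [hG0]
          simp only
          rw [Finset.mul_sum]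
          refine Finset.sum_congr rfl fun i _ => ?_
          have hip : (⟪x i, θ⟫ : ℝ) = ‖θ‖ * ⟪x i, v⟫ := by
            conv_lhs => rw [hθv]
            rw [real_inner_smul_right]
          have hmm := mul_max_of_nonneg ((1 - 2 * y i) * ⟪x i, v⟫) 0 (norm_nonneg θ)
          rw [mul_zero] at hmm
          rw [hip, hmm]
          ring_nf
        have h3 : (N:ℝ)⁻¹ * (‖θ‖ * G0 v0) ≤ (N:ℝ)⁻¹ * (‖θ‖ * G0 v) :=
          mul_le_mul_of_nonneg_left (mul_le_mul_of_nonneg_left hGv (norm_nonneg θ))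
            (by positivity)
        calc (N:ℝ)⁻¹ * G0 v0 * ‖θ‖ = (N:ℝ)⁻¹ * (‖θ‖ * G0 v0) := by ring
          _ ≤ (N:ℝ)⁻¹ * (‖θ‖ * G0 v) := h3
          _ = (N:ℝ)⁻¹ * G0 θ := by rw [hhom]
          _ ≤ J θ := hJ_lb θ
  obtain ⟨c, hc, hcJ⟩ := hcoer
  have hJstar0 : 0 ≤ Jstar := by
    rw [← hθs]
    calc (0:ℝ) = c * 0 := by ring
      _ ≤ c * ‖θs‖ := by
        exact mul_le_mul_of_nonneg_left (norm_nonneg θs) hc.le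
      _ ≤ J θs := hcJ θs
  set d : ℝ := Jstar + c * ‖θs‖ + 1 with hd
  have hdpos : 0 < d := by
    rw [hd]
    have := mul_nonneg hc.le (norm_nonneg θs)
    linarith
  refine ⟨fun r => c * r / (r + d), ?_, ?_, ?_, ?_, ?_⟩
  · apply ContinuousOn.div
    · exact (continuous_const.mul continuous_id).continuousOn
    · exact (continuous_id.add continuous_const).continuousOn
    · intro r hr
      have : (0:ℝ) ≤ r := hr
      positivity
  · intro p hp q hq hpq
    have hp0 : (0:ℝ) ≤ p := hp
    have hq0 : (0:ℝ) ≤ q := hq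
    simp only
    rw [div_lt_div_iff₀ (by linarith) (by linarith)]
    nlinarith [mul_pos (mul_pos hc hdpos) (sub_pos.2 hpq)]
  · simp
  · intro r hr
    apply div_nonneg (mul_nonneg hc.le hr)
    linarith
  · intro θ
    have hr0 : 0 ≤ J θ - Jstar := by
      have := hglb.1 (Set.mem_range_self θ)
      linarith
    have hnorm : ⟪G θ, θ - θs⟫ ≤ ‖G θ‖ * ‖θ - θs‖ := real_inner_le_norm _ _
    have hbound : c * ‖θ - θs‖ ≤ J θ - Jstar + d := by
      have h1 : ‖θ - θs‖ ≤ ‖θ‖ + ‖θs‖ := norm_sub_le _ _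
      have h2 : c * ‖θ‖ ≤ J θ := hcJ θ
      have h4 := mul_le_mul_of_nonneg_left h1 hc.le
      rw [hd]
      nlinarith
    rw [hgradeq θ]
    have hJθs : J θs = Jstar := hθs
    simp only
    rw [div_le_iff₀ (by linarith : (0:ℝ) < J θ - Jstar + d)]
    calc c * (J θ - Jstar) ≤ c * (‖G θ‖ * ‖θ - θs‖) := by
          apply mul_le_mul_of_nonneg_left _ hc.le
          have := hkey θ
          rw [hJθs] at this
          linarith
      _ = ‖G θ‖ * (c * ‖θ - θs‖) := by ring
      _ ≤ ‖G θ‖ * (J θ - Jstar + d) := mul_le_mul_of_nonneg_left hbound (norm_nonneg _)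
end

section
/- Suppose n ≥ 1 and the dataset is nonseparable, and let J* = inf_θ J(θ). Then the logistic loss cannot satisfy the K∞-PL condition: there is no class K∞ function μ (i.e., μ : ℝ_{≥0} → ℝ_{≥0} continuous, strictly increasing, μ(0) = 0, and μ(r) → ∞ as r → ∞) such that ‖∇J(θ)‖ ≥ μ( J(θ) − J* ) for all θ ∈ ℝ^n. -/
open scoped RealInnerProductSpace

set_option synthInstance.maxHeartbeats 1000000
set_option maxHeartbeats 1000000
set_option linter.unusedSectionVars false

lemma pl_aux_pos (s : ℝ) : (0:ℝ) < 1 + Real.exp (-s) := by positivity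

/-- The key pointwise identity for the logistic loss summand. -/
lemma pl_key_id (y s : ℝ) :
    y * Real.log (1 / (1 + Real.exp (-s))) +
      (1 - y) * Real.log (1 - 1 / (1 + Real.exp (-s)))
    = -(Real.log (1 + Real.exp (-s)) + (1 - y) * s) := by
  have hpos := pl_aux_pos s
  have h1 : Real.log (1 / (1 + Real.exp (-s))) = -Real.log (1 + Real.exp (-s)) := by
    rw [one_div, Real.log_inv]
  have h2 : (1:ℝ) - 1 / (1 + Real.exp (-s)) = Real.exp (-s) / (1 + Real.exp (-s)) := by
    field_simp
    ring
  have h3 : Real.log (Real.exp (-s) / (1 + Real.exp (-s)))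
      = -s - Real.log (1 + Real.exp (-s)) := by
    rw [Real.log_div (Real.exp_ne_zero _) (ne_of_gt hpos), Real.log_exp]
  rw [h1, h2, h3]; ring

lemma pl_term_nonneg (y s : ℝ) (hy : y = 0 ∨ y = 1) :
    0 ≤ Real.log (1 + Real.exp (-s)) + (1 - y) * s := by
  have h0 : 0 ≤ Real.log (1 + Real.exp (-s)) :=
    Real.log_nonneg (by nlinarith [Real.exp_pos (-s)])
  have h1 : -s ≤ Real.log (1 + Real.exp (-s)) := by
    have := Real.log_le_log (Real.exp_pos (-s)) (by nlinarith [Real.exp_pos (-s)] :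
      Real.exp (-s) ≤ 1 + Real.exp (-s))
    rwa [Real.log_exp] at this
  rcases hy with h | h <;> subst h <;> nlinarith

/-- derivative of `s ↦ log (1 + exp (-s))`. -/
lemma pl_hasDerivAt_L (s : ℝ) :
    HasDerivAt (fun t => Real.log (1 + Real.exp (-t)))
      (-(Real.exp (-s) / (1 + Real.exp (-s)))) s := by
  have h1 : HasDerivAt (fun t : ℝ => -t) (-1) s := (hasDerivAt_id s).neg
  have h2 : HasDerivAt (fun t : ℝ => Real.exp (-t)) (Real.exp (-s) * (-1)) s := h1.exp
  have h3 : HasDerivAt (fun t : ℝ => 1 + Real.exp (-t)) (Real.exp (-s) * (-1)) s :=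
    h2.const_add 1
  have h4 := h3.log (ne_of_gt (pl_aux_pos s))
  convert h4 using 1
  field_simp

variable {E : Type*} [NormedAddCommGroup E] [InnerProductSpace ℝ E] [CompleteSpace E]

lemma pl_hasFDerivAt_inner (v θ : E) :
    HasFDerivAt (fun θ' : E => ⟪θ', v⟫) (innerSL ℝ v) θ := by
  have : (fun θ' : E => ⟪θ', v⟫) = fun θ' : E => (innerSL ℝ v) θ' := by
    funext θ'; simp [real_inner_comm]
  rw [this]
  exact (innerSL ℝ v).hasFDerivAt

lemma pl_hasFDerivAt_term (v θ : E) (c : ℝ) :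
    HasFDerivAt (fun θ' : E => Real.log (1 + Real.exp (-⟪θ', v⟫)) + c * ⟪θ', v⟫)
      (((-(Real.exp (-⟪θ, v⟫) / (1 + Real.exp (-⟪θ, v⟫)))) + c) • innerSL ℝ v) θ := by
  have h1 := (pl_hasDerivAt_L (⟪θ, v⟫)).comp_hasFDerivAt θ (pl_hasFDerivAt_inner v θ)
  have h2 := (pl_hasFDerivAt_inner v θ).const_mul c
  have h3 := h1.add h2
  rw [add_smul]
  exact h3

lemma pl_neg_le_L (s : ℝ) : -s ≤ Real.log (1 + Real.exp (-s)) := by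
  have := Real.log_le_log (Real.exp_pos (-s)) (by nlinarith [Real.exp_pos (-s)] :
    Real.exp (-s) ≤ 1 + Real.exp (-s))
  rwa [Real.log_exp] at this

lemma pl_L_nonneg (s : ℝ) : 0 ≤ Real.log (1 + Real.exp (-s)) :=
  Real.log_nonneg (by nlinarith [Real.exp_pos (-s)])

lemma pl_coeff_abs_le (q y : ℝ) (hy : y = 0 ∨ y = 1) (s : ℝ)
    (hq : q = -(Real.exp (-s) / (1 + Real.exp (-s))) + (1 - y)) : |q| ≤ 1 := by
  have hE := Real.exp_pos (-s)
  have hpos := pl_aux_pos s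
  have h0 : 0 ≤ Real.exp (-s) / (1 + Real.exp (-s)) := by positivity
  have h1 : Real.exp (-s) / (1 + Real.exp (-s)) ≤ 1 :=
    (div_le_one hpos).mpr (by linarith)
  rcases hy with h | h <;> subst h <;> rw [abs_le] <;> constructor <;> linarith [hq.le, hq.ge]

lemma pl_grad_bound {N : ℕ} (x : Fin N → E) (y : Fin N → ℝ)
    (hy : ∀ i, y i = 0 ∨ y i = 1) (J : E → ℝ)
    (hJ' : J = fun θ => (N:ℝ)⁻¹ * ∑ i,
      (Real.log (1 + Real.exp (-⟪θ, x i⟫)) + (1 - y i) * ⟪θ, x i⟫)) (θ : E) :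
    ‖gradient J θ‖ ≤ (N:ℝ)⁻¹ * ∑ i, ‖x i‖ := by
  set c : Fin N → ℝ := fun i =>
    -(Real.exp (-⟪θ, x i⟫) / (1 + Real.exp (-⟪θ, x i⟫))) + (1 - y i) with hc
  have hsum : HasFDerivAt
      (fun θ' : E => ∑ i, (Real.log (1 + Real.exp (-⟪θ', x i⟫)) + (1 - y i) * ⟪θ', x i⟫))
      (∑ i, c i • innerSL ℝ (x i)) θ :=
    HasFDerivAt.fun_sum fun i _ => pl_hasFDerivAt_term (x i) θ (1 - y i)
  have hJd : HasFDerivAt J ((N:ℝ)⁻¹ • ∑ i, c i • innerSL ℝ (x i)) θ := by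
    rw [hJ']
    exact hsum.const_mul _
  have hfd : fderiv ℝ J θ = (N:ℝ)⁻¹ • ∑ i, c i • innerSL ℝ (x i) := hJd.fderiv
  have hg : ‖gradient J θ‖ = ‖fderiv ℝ J θ‖ := by
    rw [gradient, LinearIsometryEquiv.norm_map]
  rw [hg, hfd]
  refine le_trans (ContinuousLinearMap.opNorm_smul_le ((N:ℝ)⁻¹) _) ?_
  have h1 : ‖∑ i, c i • innerSL ℝ (x i)‖ ≤ ∑ i, ‖x i‖ := by
    refine le_trans (norm_sum_le _ _) (Finset.sum_le_sum fun i _ => ?_)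
    refine le_trans (ContinuousLinearMap.opNorm_smul_le (c i) (innerSL ℝ (x i))) ?_
    rw [innerSL_apply_norm]
    have := pl_coeff_abs_le (c i) (y i) (hy i) ⟪θ, x i⟫ rfl
    calc ‖c i‖ * ‖x i‖ ≤ 1 * ‖x i‖ :=
          mul_le_mul_of_nonneg_right (by rwa [Real.norm_eq_abs]) (norm_nonneg _)
      _ = ‖x i‖ := one_mul _
  have h2 : ‖(N:ℝ)⁻¹‖ = (N:ℝ)⁻¹ := by
    rw [Real.norm_eq_abs, abs_of_nonneg (by positivity)]
  rw [h2]
  exact mul_le_mul_of_nonneg_left h1 (by positivity)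

/-- if `n ≥ 1` and the dataset is nonseparable, the logistic loss cannot
satisfy a `K∞`-PL condition: there is no continuous, strictly increasing, unbounded
function `μ` with `μ(0) = 0` such that `‖∇J(θ)‖ ≥ μ(J(θ) − J*)` for all `θ`. -/
theorem stmt_12 (n N : ℕ) (hn : 1 ≤ n) (hN : 1 ≤ N)
    (x : Fin N → EuclideanSpace ℝ (Fin n)) (y : Fin N → ℝ)
    (hy : ∀ i, y i = 0 ∨ y i = 1)
    (σ : ℝ → ℝ) (hσ : ∀ s, σ s = 1 / (1 + Real.exp (-s)))
    (J : EuclideanSpace ℝ (Fin n) → ℝ)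
    (hJ : ∀ θ, J θ = -(1 / (N : ℝ)) * ∑ i, (y i * Real.log (σ ⟪θ, x i⟫) +
      (1 - y i) * Real.log (1 - σ ⟪θ, x i⟫)))
    (hns : ¬ ∃ v : EuclideanSpace ℝ (Fin n), v ≠ 0 ∧
      (∀ i, y i = 1 → 0 ≤ ⟪v, x i⟫) ∧ (∀ i, y i = 0 → ⟪v, x i⟫ ≤ 0))
    (Jstar : ℝ) (hglb : IsGLB (Set.range J) Jstar) :
    ¬ ∃ μ : ℝ → ℝ, ContinuousOn μ (Set.Ici (0 : ℝ)) ∧ StrictMonoOn μ (Set.Ici (0 : ℝ)) ∧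
      μ 0 = 0 ∧ (∀ r : ℝ, 0 ≤ r → 0 ≤ μ r) ∧
      Filter.Tendsto μ Filter.atTop Filter.atTop ∧
      ∀ θ : EuclideanSpace ℝ (Fin n), μ (J θ - Jstar) ≤ ‖gradient J θ‖ := by
  rintro ⟨μ, -, -, -, -, htop, hPL⟩
  have hNpos : (0:ℝ) < N := by exact_mod_cast hN
  -- rewrite J in a smooth closed form
  have hJ' : J = fun θ => (N:ℝ)⁻¹ * ∑ i,
      (Real.log (1 + Real.exp (-⟪θ, x i⟫)) + (1 - y i) * ⟪θ, x i⟫) := by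
    funext θ
    rw [hJ θ]
    have hterm : ∀ i ∈ Finset.univ, y i * Real.log (σ ⟪θ, x i⟫) +
        (1 - y i) * Real.log (1 - σ ⟪θ, x i⟫)
        = -(Real.log (1 + Real.exp (-⟪θ, x i⟫)) + (1 - y i) * ⟪θ, x i⟫) := by
      intro i _
      rw [hσ]
      exact pl_key_id (y i) ⟪θ, x i⟫
    rw [Finset.sum_congr rfl hterm, Finset.sum_neg_distrib]
    ring
  -- J is unbounded above by nonseparability
  have hub : ∀ M : ℝ, ∃ θ, M ≤ J θ := by
    intro M
    set v : EuclideanSpace ℝ (Fin n) := EuclideanSpace.single ⟨0, hn⟩ 1 with hvdef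
    have hv : v ≠ 0 := by
      intro h
      have h1 : v ⟨0, hn⟩ = 1 := by simp [hvdef]
      rw [h] at h1
      simp at h1
    have hmis : (∃ i, y i = 1 ∧ ⟪v, x i⟫ < 0) ∨ (∃ i, y i = 0 ∧ 0 < ⟪v, x i⟫) := by
      by_contra hc
      push_neg at hc
      exact hns ⟨v, hv, hc.1, fun i hi => hc.2 i hi⟩
    have hsum_lb : ∀ (θ : EuclideanSpace ℝ (Fin n)) (i0 : Fin N),
        Real.log (1 + Real.exp (-⟪θ, x i0⟫)) + (1 - y i0) * ⟪θ, x i0⟫ ≤ ∑ i,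
          (Real.log (1 + Real.exp (-⟪θ, x i⟫)) + (1 - y i) * ⟪θ, x i⟫) := by
      intro θ i0
      exact Finset.single_le_sum
        (f := fun i => Real.log (1 + Real.exp (-⟪θ, x i⟫)) + (1 - y i) * ⟪θ, x i⟫)
        (fun i _ => pl_term_nonneg (y i) _ (hy i)) (Finset.mem_univ i0)
    rcases hmis with ⟨i0, hyi, ha⟩ | ⟨i0, hyi, ha⟩
    · -- y i0 = 1, a < 0
      set a : ℝ := ⟪v, x i0⟫ with hadef
      set t : ℝ := N * max M 0 / (-a) with htdef
      refine ⟨t • v, ?_⟩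
      have hs : ⟪t • v, x i0⟫ = t * a := real_inner_smul_left _ _ _
      have ha' : -a ≠ 0 := ne_of_gt (neg_pos.mpr ha)
      have hta : t * a = -(N * max M 0) := by
        rw [htdef]
        field_simp
        rw [mul_div_assoc, div_self (neg_ne_zero.mp ha'), mul_one]
      have hterm_lb : N * max M 0 ≤
          Real.log (1 + Real.exp (-⟪t • v, x i0⟫)) + (1 - y i0) * ⟪t • v, x i0⟫ := by
        rw [hs, hta, hyi]
        have := pl_neg_le_L (-(N * max M 0))
        simp only [neg_neg] at this ⊢
        nlinarith
      have hsum := hsum_lb (t • v) i0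
      rw [hJ']
      have : N * max M 0 ≤ ∑ i, (Real.log (1 + Real.exp (-⟪t • v, x i⟫)) +
          (1 - y i) * ⟪t • v, x i⟫) := le_trans hterm_lb hsum
      have hM : M ≤ max M 0 := le_max_left _ _
      calc M ≤ max M 0 := hM
        _ = (N:ℝ)⁻¹ * (N * max M 0) := by field_simp
        _ ≤ (N:ℝ)⁻¹ * ∑ i, (Real.log (1 + Real.exp (-⟪t • v, x i⟫)) +
            (1 - y i) * ⟪t • v, x i⟫) :=
          mul_le_mul_of_nonneg_left this (by positivity)
    · -- y i0 = 0, a > 0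
      set a : ℝ := ⟪v, x i0⟫ with hadef
      set t : ℝ := N * max M 0 / a with htdef
      refine ⟨t • v, ?_⟩
      have hs : ⟪t • v, x i0⟫ = t * a := real_inner_smul_left _ _ _
      have ha' : a ≠ 0 := ne_of_gt ha
      have hta : t * a = N * max M 0 := by
        rw [htdef]
        field_simp
      have hterm_lb : N * max M 0 ≤
          Real.log (1 + Real.exp (-⟪t • v, x i0⟫)) + (1 - y i0) * ⟪t • v, x i0⟫ := by
        rw [hs, hta, hyi]
        have := pl_L_nonneg (N * max M 0)
        nlinarith
      have hsum := hsum_lb (t • v) i0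
      rw [hJ']
      have : N * max M 0 ≤ ∑ i, (Real.log (1 + Real.exp (-⟪t • v, x i⟫)) +
          (1 - y i) * ⟪t • v, x i⟫) := le_trans hterm_lb hsum
      calc M ≤ max M 0 := le_max_left _ _
        _ = (N:ℝ)⁻¹ * (N * max M 0) := by field_simp
        _ ≤ (N:ℝ)⁻¹ * ∑ i, (Real.log (1 + Real.exp (-⟪t • v, x i⟫)) +
            (1 - y i) * ⟪t • v, x i⟫) :=
          mul_le_mul_of_nonneg_left this (by positivity)
  -- the gradient is globally bounded
  set C : ℝ := (N:ℝ)⁻¹ * ∑ i, ‖x i‖ with hCdef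
  have hgb : ∀ θ, ‖gradient J θ‖ ≤ C := fun θ => pl_grad_bound x y hy J hJ' θ
  -- contradiction
  obtain ⟨R, hR⟩ := Filter.eventually_atTop.mp (Filter.tendsto_atTop.mp htop (C + 1))
  obtain ⟨θ, hθ⟩ := hub (R + Jstar)
  have h1 : C + 1 ≤ μ (J θ - Jstar) := hR _ (by linarith)
  have h2 := hPL θ
  have h3 := hgb θ
  linarith
end

section
/- For every θ₀ ∈ ℝ^n and every v ∈ ℝ^n, lim_{r → ∞} (1/N) ∑_{i=1}^N ( σ((θ₀ + r v)ᵀx_i) − y_i ) (vᵀx_i) = (1/N) [ ∑_{i : y_i = 1} max(−vᵀx_i, 0) + ∑_{i : y_i = 0} max(vᵀx_i, 0) ]. -/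
open Matrix Filter

lemma sig_top (c a : ℝ) (ha : 0 < a) :
    Tendsto (fun r : ℝ => 1 / (1 + Real.exp (-(c + r * a)))) atTop (nhds 1) := by
  have h1 : Tendsto (fun r : ℝ => -(c + r * a)) atTop atBot :=
    Filter.tendsto_neg_atBot_iff.mpr
      (tendsto_atTop_add_const_left _ c (tendsto_id.atTop_mul_const ha))
  have h3 : Tendsto (fun r : ℝ => 1 + Real.exp (-(c + r * a))) atTop (nhds 1) := by
    simpa using (Real.tendsto_exp_atBot.comp h1).const_add 1
  simpa [one_div] using h3.inv₀ (by norm_num)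

lemma sig_bot (c a : ℝ) (ha : a < 0) :
    Tendsto (fun r : ℝ => 1 / (1 + Real.exp (-(c + r * a)))) atTop (nhds 0) := by
  have h1 : Tendsto (fun r : ℝ => -(c + r * a)) atTop atTop :=
    Filter.tendsto_neg_atTop_iff.mpr
      (tendsto_atBot_add_const_left _ c (tendsto_id.atTop_mul_const_of_neg ha))
  have h3 : Tendsto (fun r : ℝ => 1 + Real.exp (-(c + r * a))) atTop atTop :=
    tendsto_atTop_add_const_left _ 1 (Real.tendsto_exp_atTop.comp h1)
  simpa [one_div, Pi.inv_def] using h3.inv_tendsto_atTop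

/-- the directional derivative of the logistic loss along `v` at `θ₀ + r v`
converges, as `r → ∞`, to
`(1/N) (∑_{i : yᵢ = 1} max(−vᵀxᵢ, 0) + ∑_{i : yᵢ = 0} max(vᵀxᵢ, 0))`. -/
theorem stmt_15 (n N : ℕ) (hN : 1 ≤ N)
    (x : Fin N → (Fin n → ℝ)) (y : Fin N → ℝ)
    (hy : ∀ i, y i = 0 ∨ y i = 1)
    (σ : ℝ → ℝ) (hσ : ∀ s, σ s = 1 / (1 + Real.exp (-s))) :
    ∀ θ₀ v : Fin n → ℝ,
      Filter.Tendsto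
        (fun r : ℝ => (1 / (N : ℝ)) * ∑ i, (σ ((θ₀ + r • v) ⬝ᵥ x i) - y i) * (v ⬝ᵥ x i))
        Filter.atTop
        (nhds ((1 / (N : ℝ)) *
          (∑ i ∈ Finset.univ.filter (fun i => y i = 1), max (-(v ⬝ᵥ x i)) 0 +
           ∑ i ∈ Finset.univ.filter (fun i => y i = 0), max (v ⬝ᵥ x i) 0))) := by
  intro θ₀ v
  have hdot : ∀ (r : ℝ) i, (θ₀ + r • v) ⬝ᵥ x i = θ₀ ⬝ᵥ x i + r * (v ⬝ᵥ x i) := by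
    intro r i
    simp [add_dotProduct, smul_dotProduct, smul_eq_mul]
  have key : ∀ i, Tendsto
      (fun r : ℝ => (σ ((θ₀ + r • v) ⬝ᵥ x i) - y i) * (v ⬝ᵥ x i)) atTop
      (nhds (if y i = 1 then max (-(v ⬝ᵥ x i)) 0 else max (v ⬝ᵥ x i) 0)) := by
    intro i
    set a := v ⬝ᵥ x i with hadef
    set c := θ₀ ⬝ᵥ x i with hcdef
    have hfun : (fun r : ℝ => (σ ((θ₀ + r • v) ⬝ᵥ x i) - y i) * a)
        = fun r : ℝ => (1 / (1 + Real.exp (-(c + r * a))) - y i) * a := by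
      funext r; rw [hdot r i, hσ]
    rw [hfun]
    rcases lt_trichotomy a 0 with hlt | heq | hgt
    · have h := ((sig_bot c a hlt).sub_const (y i)).mul_const a
      rcases hy i with h0 | h1
      · simpa [h0, hlt.le, max_eq_right, hlt] using h
      · have : (0 - y i) * a = max (-a) 0 := by
          rw [h1]; rw [max_eq_left (by linarith)]; ring
        rw [if_pos h1, ← this]
        exact h
    · simp [heq]
    · have h := ((sig_top c a hgt).sub_const (y i)).mul_const a
      rcases hy i with h0 | h1
      · have : (1 - y i) * a = max a 0 := by
          rw [h0, max_eq_left hgt.le]; ring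
        rw [if_neg (by rw [h0]; norm_num), ← this]
        exact h
      · have : (1 - y i) * a = max (-a) 0 := by
          rw [h1, max_eq_right (by linarith)]; ring
        rw [if_pos h1, ← this]
        exact h
  have hsum := tendsto_finset_sum Finset.univ (fun i _ => key i)
  have hsplit : (∑ i, if y i = 1 then max (-(v ⬝ᵥ x i)) 0 else max (v ⬝ᵥ x i) 0)
      = ∑ i ∈ Finset.univ.filter (fun i => y i = 1), max (-(v ⬝ᵥ x i)) 0 +
        ∑ i ∈ Finset.univ.filter (fun i => y i = 0), max (v ⬝ᵥ x i) 0 := by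
    rw [Finset.sum_ite]
    congr 1
    apply Finset.sum_congr _ (fun _ _ => rfl)
    ext i
    simp only [Finset.mem_filter, Finset.mem_univ, true_and]
    rcases hy i with h | h <;> simp [h]
  rw [← hsplit]
  exact hsum.const_mul _
end

section
/- Suppose the dataset is full rank and nonseparable. Then the logistic loss J attains its infimum on ℝ^n at a unique global minimizer θ*. -/
open Matrix

noncomputable def gfun : ℝ → ℝ := fun t => Real.log (1 + Real.exp t)

lemma gfun_cont : Continuous gfun := by
  apply Continuous.log (continuous_const.add Real.continuous_exp)
  intro t; exact (add_pos one_pos (Real.exp_pos t)).ne'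

lemma gfun_ge_max (t : ℝ) : max 0 t ≤ gfun t := by
  apply max_le
  · exact Real.log_nonneg (by nlinarith [Real.exp_pos t])
  · calc t = Real.log (Real.exp t) := (Real.log_exp t).symm
      _ ≤ gfun t := Real.log_le_log (Real.exp_pos t) (by linarith)

lemma gfun_mid_lt {a b : ℝ} (h : a ≠ b) : gfun ((a + b) / 2) < (gfun a + gfun b) / 2 := by
  have h1 : Real.exp ((a + b) / 2) = Real.exp (a / 2) * Real.exp (b / 2) := by
    rw [← Real.exp_add]; ring_nf
  have h2 : Real.exp a = Real.exp (a / 2) ^ 2 := by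
    rw [sq, ← Real.exp_add]; ring_nf
  have h3 : Real.exp b = Real.exp (b / 2) ^ 2 := by
    rw [sq, ← Real.exp_add]; ring_nf
  have hne : Real.exp (a / 2) ≠ Real.exp (b / 2) := by
    intro he; exact h (by have := Real.exp_injective he; linarith)
  have hsq : 0 < (Real.exp (a / 2) - Real.exp (b / 2)) ^ 2 := by
    have := sub_ne_zero.mpr hne; positivity
  have key : (1 + Real.exp ((a + b) / 2)) ^ 2 < (1 + Real.exp a) * (1 + Real.exp b) := by
    rw [h1, h2, h3]; nlinarith [Real.exp_pos (a / 2), Real.exp_pos (b / 2)]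
  have hlog := Real.log_lt_log (by positivity) key
  rw [Real.log_pow, Real.log_mul (by positivity) (by positivity)] at hlog
  unfold gfun
  push_cast at hlog
  linarith

lemma gfun_mid_le (a b : ℝ) : gfun ((a + b) / 2) ≤ (gfun a + gfun b) / 2 := by
  rcases eq_or_ne a b with rfl | h
  · have : (a + a) / 2 = a := by ring
    rw [this]; linarith
  · exact (gfun_mid_lt h).le


/-- if the dataset is full rank and nonseparable, the logistic loss attains
its infimum at a unique global minimizer. -/
theorem stmt_17 (n N : ℕ) (hN : 1 ≤ N)
    (x : Fin N → (Fin n → ℝ)) (y : Fin N → ℝ)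
    (hy : ∀ i, y i = 0 ∨ y i = 1)
    (σ : ℝ → ℝ) (hσ : ∀ s, σ s = 1 / (1 + Real.exp (-s)))
    (J : (Fin n → ℝ) → ℝ)
    (hJ : ∀ θ, J θ = -(1 / (N : ℝ)) * ∑ i, (y i * Real.log (σ (θ ⬝ᵥ x i)) +
      (1 - y i) * Real.log (1 - σ (θ ⬝ᵥ x i))))
    (hfullrank : Submodule.span ℝ (Set.range x) = ⊤)
    (hns : ¬ ∃ v : Fin n → ℝ, v ≠ 0 ∧
      (∀ i, y i = 1 → 0 ≤ v ⬝ᵥ x i) ∧ (∀ i, y i = 0 → v ⬝ᵥ x i ≤ 0)) :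
    ∃! θstar : Fin n → ℝ, ∀ θ, J θstar ≤ J θ := by
  -- trivial case n = 0
  rcases Nat.eq_zero_or_pos n with rfl | hn
  · have hall : ∀ θ : Fin 0 → ℝ, θ = 0 := fun θ => funext fun i => i.elim0
    exact ⟨0, fun θ => by rw [hall θ], fun θ _ => hall θ⟩
  have hN0 : (0:ℝ) < (N:ℝ) := by exact_mod_cast hN
  -- rewrite J
  have hσ1 : ∀ s : ℝ, Real.log (σ s) = -Real.log (1 + Real.exp (-s)) := by
    intro s; rw [hσ, one_div, Real.log_inv]
  have hσ2 : ∀ s : ℝ, Real.log (1 - σ s) = -Real.log (1 + Real.exp s) := by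
    intro s
    have hp : (0:ℝ) < 1 + Real.exp (-s) := by positivity
    have hq : (0:ℝ) < 1 + Real.exp s := by positivity
    have h1 : 1 - σ s = (1 + Real.exp s)⁻¹ := by
      rw [hσ, Real.exp_neg]
      have he := Real.exp_pos s
      field_simp
      ring
    rw [h1, Real.log_inv]
  have hJ' : ∀ θ, J θ = (1/(N:ℝ)) * ∑ i, gfun ((1 - 2 * y i) * (θ ⬝ᵥ x i)) := by
    intro θ
    rw [hJ θ, show -(1/(N:ℝ)) = (1/(N:ℝ)) * (-1) by ring, mul_assoc]
    congr 1
    rw [neg_one_mul, ← Finset.sum_neg_distrib]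
    apply Finset.sum_congr rfl
    intro i _
    rw [hσ1, hσ2]
    rcases hy i with h | h <;> rw [h] <;> unfold gfun <;> ring_nf
  -- continuity
  have hdot : ∀ i, Continuous (fun θ : Fin n → ℝ => θ ⬝ᵥ x i) := by
    intro i
    exact continuous_finset_sum _ fun j _ => (continuous_apply j).mul continuous_const
  have hJeqfun : J = fun θ => (1/(N:ℝ)) * ∑ i, gfun ((1 - 2 * y i) * (θ ⬝ᵥ x i)) :=
    funext hJ'
  have hJcont : Continuous J := by
    rw [hJeqfun]
    exact continuous_const.mul (continuous_finset_sum _ fun i _ =>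
      gfun_cont.comp (continuous_const.mul (hdot i)))
  -- coercivity
  set φ : (Fin n → ℝ) → ℝ := fun θ => ∑ i, max 0 ((1 - 2 * y i) * (θ ⬝ᵥ x i)) with hφ
  have hφcont : Continuous φ := continuous_finset_sum _ fun i _ =>
    continuous_const.max (continuous_const.mul (hdot i))
  have hlb : ∀ θ, φ θ ≤ (N:ℝ) * J θ := by
    intro θ
    rw [hJ', show (N:ℝ) * ((1/(N:ℝ)) * ∑ i, gfun ((1 - 2 * y i) * (θ ⬝ᵥ x i)))
        = ∑ i, gfun ((1 - 2 * y i) * (θ ⬝ᵥ x i)) by field_simp]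
    exact Finset.sum_le_sum fun i _ => gfun_ge_max _
  have hφpos : ∀ θ : Fin n → ℝ, θ ≠ 0 → 0 < φ θ := by
    intro θ hθ
    by_contra hcon
    push_neg at hcon
    have hnn : ∀ i ∈ Finset.univ, (0:ℝ) ≤ max 0 ((1 - 2 * y i) * (θ ⬝ᵥ x i)) :=
      fun i _ => le_max_left _ _
    have hsum0 : φ θ = 0 := le_antisymm hcon (Finset.sum_nonneg hnn)
    have hall := (Finset.sum_eq_zero_iff_of_nonneg hnn).mp hsum0
    apply hns
    refine ⟨θ, hθ, fun i hi => ?_, fun i hi => ?_⟩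
    · have h := hall i (Finset.mem_univ i)
      have h2 : (1 - 2 * y i) * (θ ⬝ᵥ x i) ≤ 0 := by
        calc (1 - 2 * y i) * (θ ⬝ᵥ x i) ≤ max 0 _ := le_max_right _ _
          _ = 0 := h
      rw [hi] at h2; nlinarith
    · have h := hall i (Finset.mem_univ i)
      have h2 : (1 - 2 * y i) * (θ ⬝ᵥ x i) ≤ 0 := by
        calc (1 - 2 * y i) * (θ ⬝ᵥ x i) ≤ max 0 _ := le_max_right _ _
          _ = 0 := h
      rw [hi] at h2; nlinarith
  -- min of φ on the unit sphere
  haveI : Nontrivial (Fin n → ℝ) := by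
    refine ⟨0, fun _ => 1, fun h => ?_⟩
    have := congrFun h ⟨0, hn⟩
    norm_num at this
  obtain ⟨v₀, hv₀mem, hv₀min⟩ := (isCompact_sphere (0 : Fin n → ℝ) 1).exists_isMinOn
    (NormedSpace.sphere_nonempty.mpr zero_le_one) hφcont.continuousOn
  set c := φ v₀ with hc_def
  have hc : 0 < c := by
    apply hφpos
    intro h0
    rw [h0, Metric.mem_sphere, dist_zero_left, norm_zero] at hv₀mem
    norm_num at hv₀mem
  have hgrowth : ∀ θ, c * ‖θ‖ ≤ φ θ := by
    intro θ
    rcases eq_or_ne θ 0 with rfl | hθ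
    · simp [hφ, zero_dotProduct]
    · have hr : 0 < ‖θ‖ := norm_pos_iff.mpr hθ
      have hvmem : ‖θ‖⁻¹ • θ ∈ Metric.sphere (0 : Fin n → ℝ) 1 := by
        rw [Metric.mem_sphere, dist_zero_right, norm_smul, norm_inv, norm_norm]
        field_simp
      have h1 : φ θ = ‖θ‖ * φ (‖θ‖⁻¹ • θ) := by
        rw [hφ]
        simp only [smul_dotProduct, smul_eq_mul]
        rw [Finset.mul_sum]
        apply Finset.sum_congr rfl
        intro i _
        rw [mul_max_of_nonneg _ _ hr.le, mul_zero]
        congr 1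
        field_simp
      rw [h1]
      have h2 : c ≤ φ (‖θ‖⁻¹ • θ) := hv₀min hvmem
      nlinarith
  have hJlbound : ∀ θ, (c / N) * ‖θ‖ ≤ J θ := by
    intro θ
    have h1 := hlb θ
    have h2 := hgrowth θ
    rw [div_mul_eq_mul_div, div_le_iff₀ hN0]
    nlinarith
  have hcoer : Filter.Tendsto J (Filter.cocompact _) Filter.atTop :=
    Filter.tendsto_atTop_mono hJlbound
      (tendsto_norm_cocompact_atTop.const_mul_atTop (by positivity))
  obtain ⟨θs, hmin⟩ := hJcont.exists_forall_le hcoer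
  refine ⟨θs, hmin, fun θ' hθ' => ?_⟩
  by_contra hne'
  -- strict convexity contradiction
  have hJeq : J θ' = J θs := le_antisymm (hθ' θs) (hmin θ')
  -- a coordinate where dot products differ
  have hd : ∃ i, θ' ⬝ᵥ x i ≠ θs ⬝ᵥ x i := by
    by_contra h
    push_neg at h
    set d := θ' - θs with hd_def
    have hker : ∀ i, d ⬝ᵥ x i = 0 := by
      intro i; rw [hd_def, sub_dotProduct, h i, sub_self]
    let l : (Fin n → ℝ) →ₗ[ℝ] ℝ :=
      { toFun := fun w => d ⬝ᵥ w
        map_add' := fun a b => dotProduct_add d a b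
        map_smul' := fun r a => dotProduct_smul r d a }
    have hsub : Set.range x ⊆ (LinearMap.ker l : Set (Fin n → ℝ)) := by
      rintro _ ⟨i, rfl⟩; exact hker i
    have hle : Submodule.span ℝ (Set.range x) ≤ LinearMap.ker l :=
      Submodule.span_le.mpr hsub
    rw [hfullrank] at hle
    have hd0 : d ⬝ᵥ d = 0 := hle (Submodule.mem_top (R := ℝ))
    have : d = 0 := dotProduct_self_eq_zero.mp hd0
    exact hne' (sub_eq_zero.mp this)
  obtain ⟨i₀, hi₀⟩ := hd
  set θm : Fin n → ℝ := (2⁻¹ : ℝ) • (θ' + θs) with hθm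
  have hmdot : ∀ i, θm ⬝ᵥ x i = (θ' ⬝ᵥ x i + θs ⬝ᵥ x i) / 2 := by
    intro i
    rw [hθm, smul_dotProduct, add_dotProduct, smul_eq_mul]
    ring
  have hkey : J θm < (J θ' + J θs) / 2 := by
    rw [hJ' θm, hJ' θ', hJ' θs,
      show (1/(N:ℝ)) * ∑ i, gfun ((1 - 2 * y i) * (θ' ⬝ᵥ x i)) +
        (1/(N:ℝ)) * ∑ i, gfun ((1 - 2 * y i) * (θs ⬝ᵥ x i)) =
        (1/(N:ℝ)) * (∑ i, gfun ((1 - 2 * y i) * (θ' ⬝ᵥ x i)) +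
          ∑ i, gfun ((1 - 2 * y i) * (θs ⬝ᵥ x i))) by ring,
      show ∀ A : ℝ, (1/(N:ℝ)) * A / 2 = (1/(N:ℝ)) * (A / 2) from fun A => by ring]
    apply mul_lt_mul_of_pos_left _ (by positivity : (0:ℝ) < 1/(N:ℝ))
    rw [← Finset.sum_add_distrib, Finset.sum_div]
    apply Finset.sum_lt_sum
    · intro i _
      have harg : (1 - 2 * y i) * (θm ⬝ᵥ x i) =
          ((1 - 2 * y i) * (θ' ⬝ᵥ x i) + (1 - 2 * y i) * (θs ⬝ᵥ x i)) / 2 := by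
        rw [hmdot i]; ring
      rw [harg]
      exact gfun_mid_le _ _
    · refine ⟨i₀, Finset.mem_univ i₀, ?_⟩
      have harg : (1 - 2 * y i₀) * (θm ⬝ᵥ x i₀) =
          ((1 - 2 * y i₀) * (θ' ⬝ᵥ x i₀) + (1 - 2 * y i₀) * (θs ⬝ᵥ x i₀)) / 2 := by
        rw [hmdot i₀]; ring
      rw [harg]
      apply gfun_mid_lt
      intro he
      have hy0 : (1 - 2 * y i₀) ≠ 0 := by
        rcases hy i₀ with h | h <;> rw [h] <;> norm_num
      exact hi₀ (mul_left_cancel₀ hy0 he)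
  have := hmin θm
  rw [hJeq] at hkey
  linarith
end
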